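/- arXiv:2301.03243 — 7 statements merged into one kernel-verified Lean document; each statement's English description precedes it below -/
import Mathlib

section
/- If ρ is a continuous extended seminorm on an extended locally convex space (X, τ), then the set X_fin^ρ = {x ∈ X : ρ(x) < ∞} is both open and closed in (X, τ). -/
open scoped ENNReal Pointwise
open TopologicalSpace

section ElcsDefs

variable {X : Type*} [AddCommGroup X] [Module ℝ X]

/-- An extended seminorm: absolutely homogeneous (with `∞·0 = 0` conventions of `ℝ≥0∞`)
and subadditive map into `[0,∞]`. -/
def IsExtSeminorm (ρ : X → ℝ≥0∞) : Prop :=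
  (∀ (a : ℝ) (x : X), ρ (a • x) = ENNReal.ofReal |a| * ρ x) ∧
  (∀ x y : X, ρ (x + y) ≤ ρ x + ρ y)

/-- An extended norm is a definite extended seminorm. -/
def IsExtNorm (ρ : X → ℝ≥0∞) : Prop :=
  IsExtSeminorm ρ ∧ ∀ x : X, ρ x = 0 → x = 0

/-- The topology induced by a family of extended seminorms: generated by all balls. -/
def elcsTopology (P : Set (X → ℝ≥0∞)) : TopologicalSpace X :=
  TopologicalSpace.generateFrom
    {s | ∃ ρ ∈ P, ∃ c : X, ∃ ε : ℝ≥0∞, 0 < ε ∧ s = {x | ρ (x - c) < ε}}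

/-- `(X, t)` is an extended locally convex space with defining family `P`. -/
def IsELCS (t : TopologicalSpace X) (P : Set (X → ℝ≥0∞)) : Prop :=
  (∀ ρ ∈ P, IsExtSeminorm ρ) ∧ t = elcsTopology P

theorem IsExtSeminorm.map_zero {ρ : X → ℝ≥0∞} (h : IsExtSeminorm ρ) : ρ 0 = 0 := by
  have h0 := h.1 0 0
  simpa using h0

/-- The finiteness subspace `X_fin^ρ = {x : ρ x < ∞}` of an extended seminorm. -/
def finSubmodule {ρ : X → ℝ≥0∞} (h : IsExtSeminorm ρ) : Submodule ℝ X where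
  carrier := {x | ρ x < ⊤}
  add_mem' := fun {x y} hx hy =>
    lt_of_le_of_lt (h.2 x y) (ENNReal.add_lt_top.2 ⟨hx, hy⟩)
  zero_mem' := by simp [Set.mem_setOf_eq, h.map_zero]
  smul_mem' := fun a x hx => by
    simp only [Set.mem_setOf_eq, h.1 a x]
    exact ENNReal.mul_lt_top ENNReal.ofReal_lt_top hx

/-- The finite subspace `X_fin` of an elcs: points where every continuous extended
seminorm is finite. -/
def XfinSubmodule (t : TopologicalSpace X) : Submodule ℝ X where
  carrier := {x | ∀ ρ : X → ℝ≥0∞, IsExtSeminorm ρ → @Continuous X ℝ≥0∞ t _ ρ → ρ x < ⊤}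
  add_mem' := fun {x y} hx hy ρ hρ hc =>
    lt_of_le_of_lt (hρ.2 x y) (ENNReal.add_lt_top.2 ⟨hx ρ hρ hc, hy ρ hρ hc⟩)
  zero_mem' := by
    intro ρ hρ _
    rw [hρ.map_zero]
    exact ENNReal.zero_lt_top
  smul_mem' := fun a x hx ρ hρ hc => by
    have h1 := hρ.1 a x
    rw [h1]
    exact ENNReal.mul_lt_top ENNReal.ofReal_lt_top (hx ρ hρ hc)

/-- The continuous dual of `(X, t)` as a submodule of the linear dual. -/
noncomputable def dualSubmodule (t : TopologicalSpace X) : Submodule ℝ (X →ₗ[ℝ] ℝ) where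
  carrier := {f | @Continuous X ℝ t _ fun x => f x}
  add_mem' := by
    intro f g hf hg
    simp only [Set.mem_setOf_eq, LinearMap.add_apply] at *
    exact hf.add hg
  zero_mem' := by
    simp only [Set.mem_setOf_eq, LinearMap.zero_apply]
    exact @continuous_const X ℝ t _ 0
  smul_mem' := by
    intro c f hf
    simp only [Set.mem_setOf_eq, LinearMap.smul_apply, smul_eq_mul] at *
    exact (@continuous_const X ℝ t _ c).mul hf

/-- The weak topology of `(X, t)`: the initial topology induced by the continuous dual. -/
def weakTopology (t : TopologicalSpace X) : TopologicalSpace X :=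
  ⨅ f : ↥(dualSubmodule t), TopologicalSpace.induced (fun x => f.1 x) inferInstance

/-- The weak* topology on the dual of `(X, t)`: pointwise convergence on `X`. -/
def weakStarTopology (t : TopologicalSpace X) : TopologicalSpace ↥(dualSubmodule t) :=
  ⨅ x : X, TopologicalSpace.induced (fun f : ↥(dualSubmodule t) => f.1 x) inferInstance

/-- `tF` is the finest locally convex (vector) topology on `X` coarser than `t`. -/
def IsFlcTopology (t tF : TopologicalSpace X) : Prop :=
  t ≤ tF ∧ @IsTopologicalAddGroup X tF _ ∧ @ContinuousSMul ℝ X _ _ tF ∧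
    @LocallyConvexSpace ℝ X _ _ _ _ tF ∧
    ∀ t' : TopologicalSpace X, t ≤ t' → @IsTopologicalAddGroup X t' _ →
      @ContinuousSMul ℝ X _ _ t' → @LocallyConvexSpace ℝ X _ _ _ _ t' → tF ≤ t'

/-- A set `A` is bounded in an elcs: for every neighborhood `U` of `0` there are `r > 0`
and a finite `F ⊆ A` with `A ⊆ F + r • U`. -/
def ElcsBounded (t : TopologicalSpace X) (A : Set X) : Prop :=
  ∀ U ∈ @nhds X t 0, ∃ r : ℝ, 0 < r ∧ ∃ F : Set X, F.Finite ∧ F ⊆ A ∧ A ⊆ F + r • U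

/-- `0 ∈ Core U`: `U` absorbs every point of `X`. -/
def ZeroInCore (U : Set X) : Prop :=
  ∀ x : X, ∃ δ : ℝ, 0 < δ ∧ ∀ s : ℝ, 0 ≤ s → s ≤ δ → s • x ∈ U

/-- A family of linear functionals is equicontinuous on `(X, t)` if it is uniformly bounded
by `1` on some neighborhood of `0`. -/
def EquicontSet (t : TopologicalSpace X) (A : Set (X →ₗ[ℝ] ℝ)) : Prop :=
  ∃ U ∈ @nhds X t 0, ∀ f ∈ A, ∀ x ∈ U, |f x| ≤ 1

/-- The extended-seminorm-valued sup functional `ρ_A(x) = sup_{f ∈ A} |f x|`. -/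
noncomputable def dualSupFun (A : Set (X →ₗ[ℝ] ℝ)) : X → ℝ≥0∞ :=
  fun x => ⨆ f ∈ A, ENNReal.ofReal |f x|

/-- The topology on the dual of uniform convergence on members of a family `𝔅` of subsets
of `X`. -/
def ucTopology (t : TopologicalSpace X) (𝔅 : Set (Set X)) :
    TopologicalSpace ↥(dualSubmodule t) :=
  TopologicalSpace.generateFrom
    {s | ∃ B ∈ 𝔅, ∃ g : ↥(dualSubmodule t), ∃ ε : ℝ≥0∞, 0 < ε ∧
      s = {f | (⨆ x ∈ B, ENNReal.ofReal |f.1 x - g.1 x|) < ε}}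

/-- A vector topology is normable if it is induced by a single everywhere-finite
extended norm, i.e. by a norm. -/
def IsNormableTop {Y : Type*} [AddCommGroup Y] [Module ℝ Y] (t : TopologicalSpace Y) : Prop :=
  ∃ ρ : Y → ℝ≥0∞, IsExtNorm ρ ∧ (∀ y, ρ y < ⊤) ∧ t = elcsTopology {ρ}

/-- `Y` has countable (algebraic) dimension over `ℝ`. -/
def HasCountableDim (Y : Type*) [AddCommGroup Y] [Module ℝ Y] : Prop :=
  ∃ s : Set Y, s.Countable ∧ Submodule.span ℝ s = ⊤

/-- The Minkowski functional of a set, with values in `[0,∞]` (`inf ∅ = ∞`). -/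
noncomputable def minkowskiE (U : Set X) : X → ℝ≥0∞ :=
  fun x => sInf (ENNReal.ofReal '' {r : ℝ | 0 < r ∧ x ∈ r • U})

end ElcsDefs

section FunctionSpaces

variable {Y : Type*} [TopologicalSpace Y]

/-- The subspace of continuous functions that are bounded on `B`. -/
def boundedOnSubmodule (B : Set Y) : Submodule ℝ C(Y, ℝ) where
  carrier := {f | ∃ M : ℝ, ∀ x ∈ B, |f x| ≤ M}
  add_mem' := by
    rintro f g ⟨M, hM⟩ ⟨N, hN⟩
    exact ⟨M + N, fun x hx => (abs_add_le _ _).trans (add_le_add (hM x hx) (hN x hx))⟩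
  zero_mem' := ⟨0, by simp⟩
  smul_mem' := by
    rintro c f ⟨M, hM⟩
    refine ⟨|c| * M, fun x hx => ?_⟩
    simp only [ContinuousMap.smul_apply, smul_eq_mul, abs_mul]
    exact mul_le_mul_of_nonneg_left (hM x hx) (abs_nonneg c)

/-- The sup extended seminorm `ρ_B` on `C(Y, ℝ)` associated to `B ⊆ Y`. -/
noncomputable def supExtSeminorm (B : Set Y) : C(Y, ℝ) → ℝ≥0∞ :=
  fun f => ⨆ x ∈ B, ENNReal.ofReal |f x|

end FunctionSpaces

/-- In an elcs, the finiteness subspace `X_fin^ρ` of a continuous extended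
seminorm `ρ` is both open and closed. -/
theorem stmt0 {X : Type*} [AddCommGroup X] [Module ℝ X]
    (t : TopologicalSpace X) (P : Set (X → ℝ≥0∞)) (hP : IsELCS t P)
    (ρ : X → ℝ≥0∞) (hρ : IsExtSeminorm ρ) (hc : @Continuous X ℝ≥0∞ t _ ρ) :
    @IsOpen X t {x | ρ x < ⊤} ∧ @IsClosed X t {x | ρ x < ⊤} := by
  obtain ⟨hPs, rfl⟩ := hP
  letI : TopologicalSpace X := elcsTopology P
  have htrans : ∀ v : X, Continuous (fun y : X => y + v) := by
    intro v
    apply continuous_generateFrom_iff.mpr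
    rintro s ⟨ρ', hρ', c, ε, hε, rfl⟩
    have : (fun y : X => y + v) ⁻¹' {x | ρ' (x - c) < ε} = {x | ρ' (x - (c - v)) < ε} := by
      ext y
      have : y + v - c = y - (c - v) := by abel
      simp [Set.mem_preimage, this]
    rw [this]
    exact TopologicalSpace.isOpen_generateFrom_of_mem ⟨ρ', hρ', c - v, ε, hε, rfl⟩
  have hopen : IsOpen {x | ρ x < ⊤} := by
    have : {x | ρ x < ⊤} = ρ ⁻¹' {y | y < ⊤} := rfl
    rw [this]
    exact (isOpen_gt' ⊤).preimage hc
  refine ⟨hopen, ?_⟩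
  rw [← isOpen_compl_iff, isOpen_iff_forall_mem_open]
  intro x hx
  refine ⟨{y | ρ (y - x) < ⊤}, ?_, ?_, ?_⟩
  · intro y hy
    simp only [Set.mem_compl_iff, Set.mem_setOf_eq, not_lt, top_le_iff] at hx ⊢
    by_contra hne
    have hyfin : ρ y < ⊤ := lt_of_le_of_ne le_top hne
    have hxy : ρ (x - y) < ⊤ := by
      have h1 := hρ.1 (-1) (y - x)
      have h2 : (-1 : ℝ) • (y - x) = x - y := by
        rw [neg_smul, one_smul, neg_sub]
      rw [h2] at h1
      rw [h1]
      simpa using hy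
    have : ρ x < ⊤ := by
      have := hρ.2 y (x - y)
      simp only [add_sub_cancel] at this
      exact lt_of_le_of_lt this (ENNReal.add_lt_top.2 ⟨hyfin, hxy⟩)
    rw [hx] at this
    exact lt_irrefl _ this
  · have : {y | ρ (y - x) < ⊤} = (fun y : X => y + (-x)) ⁻¹' {z | ρ z < ⊤} := by
      ext y; simp [sub_eq_add_neg]
    rw [this]
    exact hopen.preimage (htrans (-x))
  · simp [Set.mem_setOf_eq, sub_self, hρ.map_zero]
end

section
/- Let (X, τ) be an extended locally convex space with finest coarser locally convex topology τ_F. Then (X, τ) and (X, τ_F) have the same collection of bounded sets if and only if X = X_fin, i.e., (X, τ) is a locally convex space. -/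
open scoped ENNReal Pointwise
open TopologicalSpace

section Stmt3Proof

open Filter Topology

variable {X : Type*} [AddCommGroup X] [Module ℝ X]

theorem IsExtSeminorm.map_neg {ρ : X → ℝ≥0∞} (h : IsExtSeminorm ρ) (z : X) : ρ (-z) = ρ z := by
  have := h.1 (-1) z
  rw [neg_one_smul] at this
  simpa using this

private lemma generateOpen_of_forall_exists {g : Set (Set X)} {s : Set X}
    (h : ∀ x ∈ s, ∃ b ∈ g, x ∈ b ∧ b ⊆ s) : TopologicalSpace.GenerateOpen g s := by
  have hs : s = ⋃₀ {b | b ∈ g ∧ b ⊆ s} := by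
    ext x
    constructor
    · intro hx
      obtain ⟨b, hbg, hxb, hbs⟩ := h x hx
      exact ⟨b, ⟨hbg, hbs⟩, hxb⟩
    · rintro ⟨b, ⟨_, hbs⟩, hxb⟩
      exact hbs hxb
  rw [hs]
  exact TopologicalSpace.GenerateOpen.sUnion _ fun b hb => TopologicalSpace.GenerateOpen.basic b hb.1

/-- Each member of the defining family is continuous for the elcs topology. -/
lemma elcs_continuous {P : Set (X → ℝ≥0∞)} (hP : ∀ ρ ∈ P, IsExtSeminorm ρ)
    {ρ : X → ℝ≥0∞} (hρ : ρ ∈ P) : @Continuous X ℝ≥0∞ (elcsTopology P) _ ρ := by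
  letI : TopologicalSpace X := elcsTopology P
  obtain ⟨hsm, hadd⟩ := hP ρ hρ
  have hz : ρ 0 = 0 := IsExtSeminorm.map_zero ⟨hsm, hadd⟩
  have hneg : ∀ z, ρ (-z) = ρ z := IsExtSeminorm.map_neg ⟨hsm, hadd⟩
  have hball : ∀ (c : X) (ε : ℝ≥0∞), 0 < ε → IsOpen {y : X | ρ (y - c) < ε} := fun c ε hε =>
    TopologicalSpace.GenerateOpen.basic _ ⟨ρ, hρ, c, ε, hε, rfl⟩
  have heq : (ENNReal.instTopologicalSpace : TopologicalSpace ℝ≥0∞) =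
      TopologicalSpace.generateFrom {s | ∃ a, s = Set.Ioi a ∨ s = Set.Iio a} :=
    OrderTopology.topology_eq_generate_intervals
  rw [continuous_iff_coinduced_le, heq, TopologicalSpace.le_generateFrom_iff_subset_isOpen]
  rintro s ⟨a, rfl | rfl⟩
  · -- preimage of `Ioi a`
    simp only [Set.mem_setOf_eq]
    rw [isOpen_coinduced]
    show IsOpen (ρ ⁻¹' Set.Ioi a)
    rw [isOpen_iff_forall_mem_open]
    intro x hx
    have hx' : a < ρ x := hx
    by_cases hxt : ρ x = ⊤
    · refine ⟨{y : X | ρ (y - x) < 1}, fun y hy => ?_, hball x 1 one_pos, by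
        simp [sub_self, hz]⟩
      have hy' : ρ (y - x) < 1 := hy
      show a < ρ y
      have hxy : ρ (x - y) < 1 := by
        rw [show x - y = -(y - x) by abel, hneg]
        exact hy'
      have h1 : ρ x ≤ ρ (x - y) + ρ y := by
        have := hadd (x - y) y
        rwa [sub_add_cancel] at this
      by_cases hyt : ρ y = ⊤
      · rw [hyt]
        exact hx'.trans_le (le_of_eq hxt)
      · exfalso
        have : ρ x < ⊤ :=
          h1.trans_lt (ENNReal.add_lt_top.2 ⟨hxy.trans ENNReal.one_lt_top, lt_top_iff_ne_top.2 hyt⟩)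
        exact absurd hxt this.ne
    · have hat : a ≠ ⊤ := (hx'.trans (lt_top_iff_ne_top.2 hxt)).ne
      have hε : 0 < ρ x - a := tsub_pos_iff_lt.2 hx'
      refine ⟨{y : X | ρ (y - x) < ρ x - a}, fun y hy => ?_, hball x _ hε, by
        simp only [Set.mem_setOf_eq, sub_self, hz]; exact hε⟩
      have hy' : ρ (y - x) < ρ x - a := hy
      show a < ρ y
      by_contra hle
      push_neg at hle
      have hxy : ρ (x - y) < ρ x - a := by
        rw [show x - y = -(y - x) by abel, hneg]
        exact hy'
      have h1 : ρ x ≤ ρ (x - y) + ρ y := by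
        have := hadd (x - y) y
        rwa [sub_add_cancel] at this
      have : ρ x < ρ x :=
        calc ρ x ≤ ρ (x - y) + ρ y := h1
          _ ≤ ρ (x - y) + a := add_le_add le_rfl hle
          _ < (ρ x - a) + a := ENNReal.add_lt_add_right hat hxy
          _ = ρ x := tsub_add_cancel_of_le hx'.le
      exact lt_irrefl _ this
  · -- preimage of `Iio a`
    simp only [Set.mem_setOf_eq]
    rw [isOpen_coinduced]
    show IsOpen (ρ ⁻¹' Set.Iio a)
    by_cases ha : 0 < a
    · have : ρ ⁻¹' Set.Iio a = {y : X | ρ (y - 0) < a} := by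
        ext y; simp [sub_zero]
      rw [this]
      exact hball 0 a ha
    · have : ρ ⁻¹' Set.Iio a = ∅ := by
        ext y
        simp only [Set.mem_preimage, Set.mem_Iio, Set.mem_empty_iff_false, iff_false, not_lt]
        exact le_of_not_gt fun hlt => ha (lt_of_le_of_lt (zero_le : (0 : ℝ≥0∞) ≤ ρ y) hlt)
      rw [this]
      exact isOpen_empty

/-- The real seminorm obtained from an everywhere-finite extended seminorm. -/
noncomputable def toRealSeminorm (ρ : X → ℝ≥0∞) (h : IsExtSeminorm ρ)
    (hfin : ∀ x, ρ x ≠ ⊤) : Seminorm ℝ X :=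
  Seminorm.of (fun x => (ρ x).toReal)
    (fun x y => by
      show (ρ (x + y)).toReal ≤ (ρ x).toReal + (ρ y).toReal
      rw [← ENNReal.toReal_add (hfin x) (hfin y)]
      exact ENNReal.toReal_mono
        (by simp [ENNReal.add_eq_top, hfin x, hfin y]) (h.2 x y))
    (fun a x => by
      show (ρ (a • x)).toReal = ‖a‖ * (ρ x).toReal
      rw [h.1 a x, ENNReal.toReal_mul, ENNReal.toReal_ofReal (abs_nonneg a), Real.norm_eq_abs])

/-- The seminorm topology associated to a real seminorm. -/
abbrev topOfSeminorm (p : Seminorm ℝ X) : TopologicalSpace X :=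
  p.toAddGroupSeminorm.toSeminormedAddCommGroup.toUniformSpace.toTopologicalSpace

lemma topOfSeminorm_props (p : Seminorm ℝ X) :
    @IsTopologicalAddGroup X (topOfSeminorm p) _ ∧ @ContinuousSMul ℝ X _ _ (topOfSeminorm p) ∧
      @LocallyConvexSpace ℝ X _ _ _ _ (topOfSeminorm p) := by
  letI := p.toAddGroupSeminorm.toSeminormedAddCommGroup
  letI : NormedSpace ℝ X := ⟨fun a x => le_of_eq (map_smul_eq_mul p a x)⟩
  exact ⟨inferInstance, inferInstance, inferInstance⟩

lemma elcs_eq_iInf {P : Set (X → ℝ≥0∞)} (hP : ∀ ρ ∈ P, IsExtSeminorm ρ)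
    (hfin : ∀ ρ ∈ P, ∀ x, ρ x ≠ ⊤) :
    elcsTopology P = ⨅ i : {ρ // ρ ∈ P},
      topOfSeminorm (toRealSeminorm i.1 (hP i.1 i.2) (hfin i.1 i.2)) := by
  apply le_antisymm
  · refine le_iInf fun i => ?_
    obtain ⟨ρ, hρ⟩ := i
    set p := toRealSeminorm ρ (hP ρ hρ) (hfin ρ hρ) with hp
    rw [TopologicalSpace.le_def]
    intro s hs
    letI := p.toAddGroupSeminorm.toSeminormedAddCommGroup
    have hs' : ∀ x ∈ s, ∃ ε > 0, Metric.ball x ε ⊆ s := Metric.isOpen_iff.mp hs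
    show TopologicalSpace.GenerateOpen _ s
    apply generateOpen_of_forall_exists
    intro x hx
    obtain ⟨ε, hε, hball⟩ := hs' x hx
    refine ⟨{y : X | ρ (y - x) < ENNReal.ofReal ε}, ⟨ρ, hρ, x, ENNReal.ofReal ε,
      ENNReal.ofReal_pos.2 hε, rfl⟩, ?_, ?_⟩
    · show ρ (x - x) < ENNReal.ofReal ε
      rw [sub_self, (hP ρ hρ).map_zero]
      exact ENNReal.ofReal_pos.2 hε
    · intro y hy
      have hy' : ρ (y - x) < ENNReal.ofReal ε := hy
      apply hball
      show dist y x < ε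
      exact (ENNReal.lt_ofReal_iff_toReal_lt (hfin ρ hρ _)).1 (by
        rw [show -y + x = -(y - x) by abel, (hP ρ hρ).map_neg]; exact hy')
  · apply le_generateFrom
    rintro s ⟨ρ, hρ, c, ε, hε, rfl⟩
    have hle : (⨅ i : {ρ // ρ ∈ P},
        topOfSeminorm (toRealSeminorm i.1 (hP i.1 i.2) (hfin i.1 i.2))) ≤
        topOfSeminorm (toRealSeminorm ρ (hP ρ hρ) (hfin ρ hρ)) :=
      iInf_le _ (⟨ρ, hρ⟩ : {ρ // ρ ∈ P})
    refine (TopologicalSpace.le_def.1 hle) _ ?_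
    letI := (toRealSeminorm ρ (hP ρ hρ) (hfin ρ hρ)).toAddGroupSeminorm.toSeminormedAddCommGroup
    by_cases hεt : ε = ⊤
    · have : {x : X | ρ (x - c) < ε} = Set.univ := by
        ext x
        simp [hεt, lt_top_iff_ne_top.2 (hfin ρ hρ (x - c))]
      rw [this]
      exact isOpen_univ
    · have : {x : X | ρ (x - c) < ε} = Metric.ball c ε.toReal := by
        ext x
        show ρ (x - c) < ε ↔ dist x c < ε.toReal
        rw [show dist x c = (ρ (x - c)).toReal from by
          show (ρ (-x + c)).toReal = _; rw [show -x + c = -(x - c) by abel, (hP ρ hρ).map_neg]]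
        exact (ENNReal.toReal_lt_toReal (hfin ρ hρ _) hεt).symm
      rw [this]
      exact Metric.isOpen_ball

end Stmt3Proof

/-- `(X, τ)` and `(X, τ_F)` have the same bounded sets iff `X = X_fin`. -/
theorem stmt3 {X : Type*} [AddCommGroup X] [Module ℝ X]
    (t tF : TopologicalSpace X) (P : Set (X → ℝ≥0∞)) (hP : IsELCS t P)
    (hF : IsFlcTopology t tF) :
    (∀ A : Set X, ElcsBounded t A ↔ ElcsBounded tF A) ↔
      XfinSubmodule t = (⊤ : Submodule ℝ X) := by
  obtain ⟨hPsem, ht⟩ := hP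
  constructor
  · intro h
    by_contra hne
    obtain ⟨x, hx⟩ : ∃ x, x ∉ XfinSubmodule t := by
      by_contra h'
      push_neg at h'
      exact hne (Submodule.eq_top_iff'.2 h')
    have hx' : ¬ ∀ ρ : X → ℝ≥0∞, IsExtSeminorm ρ → @Continuous X ℝ≥0∞ t _ ρ → ρ x < ⊤ := hx
    push_neg at hx'
    obtain ⟨ρ, hρsem, hρcont, hρtop⟩ := hx'
    have htop : ρ x = ⊤ := top_le_iff.1 hρtop
    have hx0 : x ≠ 0 := by
      intro h0
      rw [h0, hρsem.map_zero] at htop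
      exact ENNReal.top_ne_zero htop.symm
    set a : ℕ → X := fun n => (1 / ((n : ℝ) + 1)) • x with ha
    have hcoef : ∀ n m : ℕ, n ≠ m → (1 / ((n : ℝ) + 1)) - 1 / ((m : ℝ) + 1) ≠ 0 := by
      intro n m hnm hzero
      have heq : (1 : ℝ) / ((n : ℝ) + 1) = 1 / ((m : ℝ) + 1) := sub_eq_zero.1 hzero
      have : ((n : ℝ) + 1) = ((m : ℝ) + 1) := by
        rw [← one_div_one_div ((n : ℝ) + 1), heq, one_div_one_div]
      have h2 : (n : ℝ) = (m : ℝ) := by linarith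
      exact hnm (Nat.cast_inj.mp h2)
    have hainj : Function.Injective a := by
      intro n m hnm
      by_contra hc
      apply hcoef n m hc
      by_contra hd
      apply hx0
      have hsm : ((1 / ((n : ℝ) + 1)) - 1 / ((m : ℝ) + 1)) • x = 0 := by
        rw [sub_smul]
        simp only [ha] at hnm
        rw [hnm, sub_self]
      calc x = (((1 / ((n : ℝ) + 1)) - 1 / ((m : ℝ) + 1))⁻¹ *
            ((1 / ((n : ℝ) + 1)) - 1 / ((m : ℝ) + 1))) • x := by
            rw [inv_mul_cancel₀ hd, one_smul]
        _ = ((1 / ((n : ℝ) + 1)) - 1 / ((m : ℝ) + 1))⁻¹ •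
            (((1 / ((n : ℝ) + 1)) - 1 / ((m : ℝ) + 1)) • x) := by rw [mul_smul]
        _ = 0 := by rw [hsm, smul_zero]
    have haρ : ∀ n, ρ (a n) = ⊤ := by
      intro n
      have hpos : (0 : ℝ) < 1 / ((n : ℝ) + 1) := by positivity
      rw [ha]
      simp only [hρsem.1, htop]
      rw [ENNReal.mul_top]
      simp only [ne_eq, ENNReal.ofReal_eq_zero, not_le, abs_pos]
      exact ne_of_gt hpos
    set A : Set X := insert 0 (Set.range a) with hA
    have hbF : ElcsBounded tF A := by
      intro U hU
      have h0U : (0 : X) ∈ U := mem_of_mem_nhds hU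
      have htd : Filter.Tendsto a Filter.atTop (@nhds X tF 0) := by
        letI : TopologicalSpace X := tF
        haveI : ContinuousSMul ℝ X := hF.2.2.1
        have hc : Continuous fun s : ℝ => s • x := continuous_id.smul continuous_const
        have h2 := (hc.tendsto 0).comp tendsto_one_div_add_atTop_nhds_zero_nat
        rw [ha]
        simpa [Function.comp_def] using h2
      obtain ⟨N, hN⟩ := Filter.mem_atTop_sets.1 (htd hU)
      refine ⟨1, one_pos, insert 0 (a '' Set.Iio N),
        ((Set.finite_Iio N).image a).insert 0,
        Set.insert_subset_insert (Set.image_subset_range a _), ?_⟩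
      rw [one_smul]
      rintro y (rfl | ⟨n, rfl⟩)
      · have := Set.add_mem_add (Set.mem_insert (0 : X) (a '' Set.Iio N)) h0U
        simpa using this
      · by_cases hn : n < N
        · have hmem : a n ∈ insert 0 (a '' Set.Iio N) :=
            Set.mem_insert_of_mem _ ⟨n, hn, rfl⟩
          have := Set.add_mem_add hmem h0U
          simpa using this
        · have hmem : a n ∈ U := hN n (le_of_not_gt hn)
          have := Set.add_mem_add (Set.mem_insert (0 : X) (a '' Set.Iio N)) hmem
          simpa using this
    have hbt : ¬ ElcsBounded t A := by
      intro hb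
      have hUnh : {y : X | ρ y < 1} ∈ @nhds X t 0 := by
        letI : TopologicalSpace X := t
        have h1 : Set.Iio (1 : ℝ≥0∞) ∈ nhds (ρ 0) := by
          rw [hρsem.map_zero]
          exact isOpen_Iio.mem_nhds (Set.mem_Iio.2 zero_lt_one)
        exact hρcont.continuousAt.preimage_mem_nhds h1
      obtain ⟨r, hr, F, hFfin, hFA, hcov⟩ := hb _ hUnh
      have hrange : Set.range a ⊆ F := by
        rintro _ ⟨n, rfl⟩
        have han : a n ∈ F + r • {y : X | ρ y < 1} :=
          hcov (Set.mem_insert_of_mem _ ⟨n, rfl⟩)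
        obtain ⟨f, hf, u, hu, heq⟩ := han
        obtain ⟨v, hv, rfl⟩ := hu
        have hvlt : ρ v < 1 := hv
        have h2 : ρ (a n - f) ≠ ⊤ := by
          have hsub : a n - f = r • v := by rw [← heq, add_sub_cancel_left]
          rw [hsub, hρsem.1 r v]
          exact (ENNReal.mul_lt_top ENNReal.ofReal_lt_top
            (hvlt.trans ENNReal.one_lt_top)).ne
        rcases hFA hf with rfl | ⟨m, rfl⟩
        · rw [sub_zero] at h2
          exact absurd (haρ n) h2
        · by_cases hnm : n = m
          · subst hnm
            exact hf
          · exfalso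
            apply h2
            have hsub : a n - a m = ((1 / ((n : ℝ) + 1)) - 1 / ((m : ℝ) + 1)) • x := by
              rw [ha]
              simp only []
              rw [sub_smul]
            rw [hsub, hρsem.1, htop]
            rw [ENNReal.mul_top]
            simp only [ne_eq, ENNReal.ofReal_eq_zero, not_le, abs_pos]
            exact hcoef n m hnm
      exact Set.infinite_range_of_injective hainj (hFfin.subset hrange)
    exact hbt ((h A).2 hbF)
  · intro hfin_top
    have hcont : ∀ ρ ∈ P, @Continuous X ℝ≥0∞ t _ ρ := by
      intro ρ hρ
      rw [ht]
      exact elcs_continuous hPsem hρ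
    have hfin : ∀ ρ ∈ P, ∀ y, ρ y ≠ ⊤ := by
      intro ρ hρ y
      have hy : y ∈ XfinSubmodule t := by rw [hfin_top]; exact Submodule.mem_top
      have hy' : ∀ σ : X → ℝ≥0∞, IsExtSeminorm σ → @Continuous X ℝ≥0∞ t _ σ → σ y < ⊤ := hy
      exact (hy' ρ (hPsem ρ hρ) (hcont ρ hρ)).ne
    have hteq : t = tF := by
      have h1 : t = ⨅ i : {ρ // ρ ∈ P},
          topOfSeminorm (toRealSeminorm i.1 (hPsem i.1 i.2) (hfin i.1 i.2)) :=
        ht.trans (elcs_eq_iInf hPsem hfin)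
      have hgrp : @IsTopologicalAddGroup X t _ := by
        rw [h1]; exact topologicalAddGroup_iInf fun i => (topOfSeminorm_props _).1
      have hsm : @ContinuousSMul ℝ X _ _ t := by
        rw [h1]; exact continuousSMul_iInf fun i => (topOfSeminorm_props _).2.1
      have hlc : @LocallyConvexSpace ℝ X _ _ _ _ t := by
        rw [h1]; exact LocallyConvexSpace.iInf fun i => (topOfSeminorm_props _).2.2
      exact le_antisymm hF.1 (hF.2.2.2.2 t le_rfl hgrp hsm hlc)
    rw [hteq]
    exact fun A => Iff.rfl
end

section
/- Let (X, τ) be an elcs with flc topology τ_F and weak topology τ_w. If τ_F = τ_w, then for every continuous extended seminorm ρ on (X, τ), the quotient vector space X / X_fin^ρ is finite dimensional. -/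
open scoped ENNReal Pointwise
open TopologicalSpace

open scoped Topology

section AuxNorm

variable {V : Type*} [AddCommGroup V] [Module ℝ V]

/-- An ℓ¹-type norm on an arbitrary real vector space, via a basis. -/
noncomputable def auxNormFun (V : Type*) [AddCommGroup V] [Module ℝ V] : V → ℝ :=
  fun y => ((Module.Basis.ofVectorSpace ℝ V).repr y).sum fun _ r => |r|

lemma auxNormFun_zero : auxNormFun V 0 = 0 := by
  simp [auxNormFun]

lemma auxNormFun_add_le (x y : V) :
    auxNormFun V (x + y) ≤ auxNormFun V x + auxNormFun V y := by
  classical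
  set b := Module.Basis.ofVectorSpace ℝ V
  set f := b.repr x with hf
  set g := b.repr y with hg
  have hxy : b.repr (x + y) = f + g := by rw [map_add]
  have h0 : ∀ i ∈ f.support ∪ g.support, |(0 : ℝ)| = 0 := by simp
  have h1 : (f + g).sum (fun _ r => |r|) = ∑ i ∈ f.support ∪ g.support, |(f + g) i| :=
    Finsupp.sum_of_support_subset _ (Finsupp.support_add) _ (fun i _ => abs_zero)
  have h2 : f.sum (fun _ r => |r|) = ∑ i ∈ f.support ∪ g.support, |f i| :=
    Finsupp.sum_of_support_subset _ Finset.subset_union_left _ (fun i _ => abs_zero)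
  have h3 : g.sum (fun _ r => |r|) = ∑ i ∈ f.support ∪ g.support, |g i| :=
    Finsupp.sum_of_support_subset _ Finset.subset_union_right _ (fun i _ => abs_zero)
  show (b.repr (x+y)).sum (fun _ r => |r|) ≤ f.sum (fun _ r => |r|) + g.sum (fun _ r => |r|)
  rw [hxy, h1, h2, h3, ← Finset.sum_add_distrib]
  exact Finset.sum_le_sum fun i _ => by
    rw [Finsupp.add_apply]; exact abs_add_le _ _

lemma auxNormFun_neg (x : V) : auxNormFun V (-x) = auxNormFun V x := by
  classical
  unfold auxNormFun
  rw [map_neg]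
  rw [Finsupp.sum_neg_index (fun _ => abs_zero)]
  simp

lemma auxNormFun_smul (a : ℝ) (x : V) : auxNormFun V (a • x) = |a| * auxNormFun V x := by
  classical
  unfold auxNormFun
  rw [map_smul]
  rw [Finsupp.sum_smul_index (fun _ => abs_zero)]
  rw [Finsupp.mul_sum]
  simp [abs_mul]

lemma auxNormFun_eq_zero {x : V} (h : auxNormFun V x = 0) : x = 0 := by
  classical
  set b := Module.Basis.ofVectorSpace ℝ V
  have hrepr : b.repr x = 0 := by
    by_contra hne
    obtain ⟨i, hi⟩ := Finsupp.ne_iff.mp hne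
    have hmem : i ∈ (b.repr x).support := Finsupp.mem_support_iff.mpr (by simpa using hi)
    have hle : |b.repr x i| ≤ (b.repr x).sum fun _ r => |r| := by
      rw [Finsupp.sum]
      exact Finset.single_le_sum (f := fun j => |b.repr x j|) (fun j _ => abs_nonneg _) hmem
    have : |b.repr x i| ≤ 0 := le_of_le_of_eq hle h
    have : b.repr x i = 0 := abs_nonpos_iff.mp this
    simp [this] at hi
  have := congrArg (b.repr.symm) hrepr
  simpa using this

/-- A normed group structure on an arbitrary real vector space. -/
@[reducible] noncomputable def auxNGroup (V : Type*) [AddCommGroup V] [Module ℝ V] :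
    NormedAddCommGroup V :=
  AddGroupNorm.toNormedAddCommGroup
    { toFun := auxNormFun V
      map_zero' := auxNormFun_zero
      add_le' := auxNormFun_add_le
      neg' := auxNormFun_neg
      eq_zero_of_map_eq_zero' := fun _ h => auxNormFun_eq_zero h }

@[reducible] noncomputable def auxNSpace (V : Type*) [AddCommGroup V] [Module ℝ V] :
    @NormedSpace ℝ V _ (auxNGroup V).toSeminormedAddCommGroup := by
  letI := auxNGroup V
  exact ⟨fun a y => by
    show auxNormFun V (a • y) ≤ ‖a‖ * auxNormFun V y
    rw [Real.norm_eq_abs, auxNormFun_smul]⟩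

end AuxNorm


/-- The topology induced from a normed space by a linear map is a locally convex
vector topology. -/
lemma auxInducedFacts {X V : Type*} [AddCommGroup X] [Module ℝ X]
    [NormedAddCommGroup V] [NormedSpace ℝ V] (f : X →ₗ[ℝ] V) :
    @IsTopologicalAddGroup X (TopologicalSpace.induced (⇑f) UniformSpace.toTopologicalSpace) _ ∧
    @ContinuousSMul ℝ X _ _ (TopologicalSpace.induced (⇑f) UniformSpace.toTopologicalSpace) ∧
    @LocallyConvexSpace ℝ X _ _ _ _
      (TopologicalSpace.induced (⇑f) UniformSpace.toTopologicalSpace) :=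
  ⟨topologicalAddGroup_induced f, continuousSMul_induced f, LocallyConvexSpace.induced f⟩

/-- if `τ_F = τ_w` then `X / X_fin^ρ` is finite dimensional for every
continuous extended seminorm `ρ`. -/
theorem stmt5 {X : Type*} [AddCommGroup X] [Module ℝ X]
    (t tF : TopologicalSpace X) (P : Set (X → ℝ≥0∞)) (hP : IsELCS t P)
    (hF : IsFlcTopology t tF) (h : tF = weakTopology t)
    (ρ : X → ℝ≥0∞) (hρ : IsExtSeminorm ρ) (hc : @Continuous X ℝ≥0∞ t _ ρ) :
    FiniteDimensional ℝ (X ⧸ finSubmodule hρ) := by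
  classical
  letI : NormedAddCommGroup (X ⧸ finSubmodule hρ) := auxNGroup _
  letI : NormedSpace ℝ (X ⧸ finSubmodule hρ) := auxNSpace _
  set tQ : TopologicalSpace (X ⧸ finSubmodule hρ) := UniformSpace.toTopologicalSpace with htQ
  set π : X →ₗ[ℝ] X ⧸ finSubmodule hρ := (finSubmodule hρ).mkQ with hπ
  -- translations are `t`-continuous
  have htrans : ∀ c : X, Continuous[t, t] (fun y : X => y - c) := by
    intro c
    rw [hP.2]
    unfold elcsTopology
    rw [continuous_generateFrom_iff]
    rintro s ⟨σ, hσ, c₀, ε, hε, rfl⟩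
    have hpre : (fun y : X => y - c) ⁻¹' {x | σ (x - c₀) < ε}
        = {y : X | σ (y - (c + c₀)) < ε} := by
      ext y
      simp only [Set.mem_preimage, Set.mem_setOf_eq, sub_sub]
    rw [hpre]
    exact isOpen_generateFrom_of_mem ⟨σ, hσ, c + c₀, ε, hε, rfl⟩
  -- the finiteness subspace is `t`-open, and so are its cosets
  have hXfopen : IsOpen[t] {y : X | ρ y < ⊤} := (continuous_def.mp hc) _ isOpen_Iio
  have hcoset : ∀ x : X, IsOpen[t] {y : X | ρ (y - x) < ⊤} := fun x =>
    (continuous_def.mp (htrans x)) _ hXfopen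
  -- the quotient map is `t`-continuous into any topology on the quotient
  have hπopen : ∀ s : Set (X ⧸ finSubmodule hρ), IsOpen[t] (⇑π ⁻¹' s) := by
    letI : TopologicalSpace X := t
    intro s
    have hs : ⇑π ⁻¹' s = ⋃ x ∈ ⇑π ⁻¹' s, {y : X | ρ (y - x) < ⊤} := by
      ext y
      simp only [Set.mem_iUnion, Set.mem_preimage, Set.mem_setOf_eq, exists_prop]
      constructor
      · intro hy
        refine ⟨y, hy, ?_⟩
        rw [sub_self, hρ.map_zero]
        exact ENNReal.zero_lt_top
      · rintro ⟨x, hx, hyx⟩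
        have hmem : y - x ∈ finSubmodule hρ := hyx
        have hpi : π y = π x := by
          rw [hπ]
          exact (Submodule.Quotient.eq _).mpr hmem
        rw [hpi]
        exact hx
    rw [hs]
    exact isOpen_biUnion fun x _ => hcoset x
  have hπcont : Continuous[t, tQ] ⇑π := continuous_def.mpr fun s _ => hπopen s
  have hle : t ≤ TopologicalSpace.induced (⇑π) tQ := continuous_iff_le_induced.mp hπcont
  -- the induced topology is a locally convex vector topology
  obtain ⟨hG, hSMul, hLC⟩ := auxInducedFacts π
  have hflc : weakTopology t ≤ TopologicalSpace.induced (⇑π) tQ := by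
    rw [← h, htQ]
    exact hF.2.2.2.2 _ (htQ ▸ hle) hG hSMul hLC
  have hwcont : Continuous[weakTopology t, tQ] ⇑π := continuous_iff_le_induced.mpr hflc
  -- extract a weak neighborhood of 0 inside the preimage of the unit ball
  have hU : (⇑π ⁻¹' Metric.ball 0 1) ∈ @nhds X (weakTopology t) 0 := by
    letI : TopologicalSpace X := weakTopology t
    have hball : IsOpen[tQ] (Metric.ball (0 : X ⧸ finSubmodule hρ) 1) := Metric.isOpen_ball
    have hopen : IsOpen[weakTopology t] (⇑π ⁻¹' Metric.ball 0 1) :=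
      (continuous_def.mp hwcont) _ hball
    have h0 : (0 : X) ∈ ⇑π ⁻¹' Metric.ball 0 1 := by
      simp only [Set.mem_preimage, map_zero]
      exact Metric.mem_ball_self one_pos
    exact hopen.mem_nhds h0
  rw [weakTopology, nhds_iInf] at hU
  obtain ⟨I, hIfin, V, hV, hUeq⟩ := Filter.mem_iInf.mp hU
  -- any point killed by all the extracted functionals lies in the finiteness subspace
  have key : ∀ x : X, (∀ i : I, ((i : ↥(dualSubmodule t)) : X →ₗ[ℝ] ℝ) x = 0) →
      x ∈ finSubmodule hρ := by
    intro x hx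
    have hsball : ∀ s : ℝ, ‖π (s • x)‖ < 1 := by
      intro s
      have hmem : s • x ∈ ⇑π ⁻¹' Metric.ball 0 1 := by
        rw [hUeq]
        refine Set.mem_iInter.mpr fun i => ?_
        obtain ⟨u, hu, hsub⟩ := (mem_nhds_induced _ _ _).mp (hV i)
        apply hsub
        show ((i : ↥(dualSubmodule t)) : X →ₗ[ℝ] ℝ) (s • x) ∈ u
        have hz : ((i : ↥(dualSubmodule t)) : X →ₗ[ℝ] ℝ) (s • x) = 0 := by
          rw [map_smul, hx i, smul_zero]
        rw [hz]
        have hz0 : ((i : ↥(dualSubmodule t)) : X →ₗ[ℝ] ℝ) (0 : X) = 0 := map_zero _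
        rw [hz0] at hu
        exact mem_of_mem_nhds hu
      simpa [Metric.mem_ball, dist_zero_right] using hmem
    have hpix : π x = 0 := by
      by_contra hne
      have hpos : 0 < ‖π x‖ := norm_pos_iff.mpr hne
      have h2 := hsball (2 / ‖π x‖)
      rw [map_smul, norm_smul, Real.norm_eq_abs, abs_of_pos (by positivity),
        div_mul_cancel₀ _ (ne_of_gt hpos)] at h2
      linarith
    have hmk : Submodule.Quotient.mk x = (0 : X ⧸ finSubmodule hρ) := by
      rw [← Submodule.mkQ_apply]
      exact hpix
    exact (Submodule.Quotient.mk_eq_zero _).mp hmk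
  -- finite dimensionality via the finitely many functionals
  letI : Fintype ↥I := hIfin.fintype
  set φ : X →ₗ[ℝ] (↥I → ℝ) :=
    LinearMap.pi (fun i : ↥I => ((i : ↥(dualSubmodule t)) : X →ₗ[ℝ] ℝ)) with hφ
  have hinj : Function.Injective ((LinearMap.ker φ).liftQ φ le_rfl) := by
    rw [← LinearMap.ker_eq_bot]
    exact Submodule.ker_liftQ_eq_bot _ _ _ le_rfl
  haveI hfd : FiniteDimensional ℝ (X ⧸ LinearMap.ker φ) :=
    FiniteDimensional.of_injective _ hinj
  have hker' : LinearMap.ker φ ≤ (finSubmodule hρ).comap (LinearMap.id : X →ₗ[ℝ] X) := by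
    rw [Submodule.comap_id]
    intro x hx
    refine key x fun i => ?_
    have hx0 : φ x = 0 := LinearMap.mem_ker.mp hx
    have := congrFun hx0 i
    simpa [hφ] using this
  have hsurj : Function.Surjective
      (Submodule.mapQ (LinearMap.ker φ) (finSubmodule hρ) LinearMap.id hker') := by
    intro y
    obtain ⟨x, rfl⟩ := Submodule.Quotient.mk_surjective _ y
    exact ⟨Submodule.Quotient.mk x, by rw [Submodule.mapQ_apply]; rfl⟩
  exact Module.Finite.of_surjective _ hsurj
end

section
/- Let (X, ‖·‖) be an extended normed linear space with X = X_fin ⊕ M and flc topology τ_F. Then the subspace (M, τ_F|_M) is separable if and only if the dimension of M is countable. -/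
open scoped ENNReal Pointwise
open TopologicalSpace

/-- A linear functional vanishing on the finite subspace is continuous for the
extended-norm topology (it is locally constant). -/
lemma extNorm_continuous_of_vanishing {X : Type*} [AddCommGroup X] [Module ℝ X]
    (ρ : X → ℝ≥0∞) (hρ : IsExtSeminorm ρ)
    (f : X →ₗ[ℝ] ℝ) (hf : ∀ x : X, ρ x < ⊤ → f x = 0) :
    @Continuous X ℝ (elcsTopology {ρ}) _ f := by
  letI : TopologicalSpace X := elcsTopology {ρ}
  rw [continuous_def]
  intro V hV
  have key : f ⁻¹' V = ⋃ c ∈ f ⁻¹' V, {x | ρ (x - c) < 1} := by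
    ext x
    simp only [Set.mem_iUnion, Set.mem_preimage, Set.mem_setOf_eq]
    constructor
    · intro hx
      exact ⟨x, hx, by simp [sub_self, hρ.map_zero]⟩
    · rintro ⟨c, hc, hball⟩
      have h0 : f (x - c) = 0 := hf _ (hball.trans ENNReal.one_lt_top)
      rw [map_sub] at h0
      have hxc : f x = f c := by linarith
      rwa [hxc]
  rw [key]
  refine isOpen_biUnion fun c hc => ?_
  exact TopologicalSpace.GenerateOpen.basic _ ⟨ρ, rfl, c, 1, zero_lt_one, rfl⟩

/-- for an enls with `X = X_fin ⊕ M`, `(M, τ_F|_M)` is separable iff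
`dim M` is countable. -/
theorem stmt9 {X : Type*} [AddCommGroup X] [Module ℝ X]
    (ρ : X → ℝ≥0∞) (hρ : IsExtNorm ρ)
    (t tF : TopologicalSpace X) (ht : t = elcsTopology {ρ})
    (hF : IsFlcTopology t tF)
    (M : Submodule ℝ X) (hM : IsCompl (finSubmodule hρ.1) M) :
    @TopologicalSpace.SeparableSpace ↥M (TopologicalSpace.induced Subtype.val tF) ↔
      HasCountableDim ↥M := by
  obtain ⟨htF, hga, hsm, hlc, hfinest⟩ := hF
  letI : TopologicalSpace X := tF
  haveI : IsTopologicalAddGroup X := hga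
  haveI : ContinuousSMul ℝ X := hsm
  show TopologicalSpace.SeparableSpace ↥M ↔ HasCountableDim ↥M
  constructor
  · -- separable → countable dimension
    intro hsep
    obtain ⟨D, hDc, hDd⟩ := hsep.exists_countable_dense
    refine ⟨D, hDc, ?_⟩
    by_contra hne
    obtain ⟨m, hm⟩ : ∃ m : ↥M, m ∉ Submodule.span ℝ D := by
      by_contra h
      push_neg at h
      exact hne (Submodule.eq_top_iff'.mpr h)
    set N : Submodule ℝ ↥M := Submodule.span ℝ D with hN
    have hm0 : N.mkQ m ≠ 0 := by
      rw [Submodule.mkQ_apply, Ne, Submodule.Quotient.mk_eq_zero]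
      exact hm
    haveI hfree : Module.Free ℝ (↥M ⧸ N) := Module.Free.of_divisionRing ℝ _
    haveI hproj : Module.Projective ℝ (↥M ⧸ N) := Module.Projective.of_free
    obtain ⟨φ, hφ⟩ : ∃ φ : Module.Dual ℝ (↥M ⧸ N), φ (N.mkQ m) ≠ 0 := by
      by_contra h
      push_neg at h
      exact hm0 ((Module.forall_dual_apply_eq_zero_iff ℝ _).mp h)
    set g : ↥M →ₗ[ℝ] ℝ := φ.comp N.mkQ with hg
    set f : X →ₗ[ℝ] ℝ :=
      g.comp (M.linearProjOfIsCompl (finSubmodule hρ.1) hM.symm) with hfdef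
    have hfin : ∀ x : X, ρ x < ⊤ → f x = 0 := by
      intro x hx
      have hx' : x ∈ finSubmodule hρ.1 := hx
      have hproj : M.linearProjOfIsCompl (finSubmodule hρ.1) hM.symm x = 0 :=
        Submodule.linearProjOfIsCompl_apply_right' hM.symm hx'
      rw [hfdef, LinearMap.comp_apply, hproj, map_zero]
    have hcontt : @Continuous X ℝ t _ f := by
      rw [ht]
      exact extNorm_continuous_of_vanishing ρ hρ.1 f hfin
    have hfle : t ≤ TopologicalSpace.induced f inferInstance :=
      Continuous.le_induced hcontt
    have hindga : @IsTopologicalAddGroup X (TopologicalSpace.induced f inferInstance) _ :=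
      topologicalAddGroup_induced f.toAddMonoidHom
    have hindsm : @ContinuousSMul ℝ X _ _ (TopologicalSpace.induced f inferInstance) :=
      continuousSMul_induced f
    have hindlc : @LocallyConvexSpace ℝ X _ _ _ _ (TopologicalSpace.induced f inferInstance) :=
      LocallyConvexSpace.induced f
    have hfinf : tF ≤ TopologicalSpace.induced f inferInstance := by
      have h1 : t ≤ tF ⊓ TopologicalSpace.induced f inferInstance := le_inf htF hfle
      have h2 := hfinest _ h1 (topologicalAddGroup_inf hga hindga)
        (@continuousSMul_inf ℝ X _ _ tF (TopologicalSpace.induced f inferInstance) hsm hindsm)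
        (LocallyConvexSpace.inf hlc hindlc)
      exact h2.trans inf_le_right
    have hfc : Continuous f := continuous_iff_le_induced.mpr hfinf
    have hgc : Continuous fun x : ↥M => g x := by
      have hcomp : (fun x : ↥M => g x) = fun x : ↥M => f x.val := by
        funext x
        have hx : M.linearProjOfIsCompl (finSubmodule hρ.1) hM.symm ↑x = x :=
          Submodule.linearProjOfIsCompl_apply_left hM.symm x
        simp only [hfdef, LinearMap.coe_comp, Function.comp_apply, hx]
      rw [hcomp]
      exact hfc.comp continuous_subtype_val
    have hclosed : IsClosed {x : ↥M | g x = 0} := isClosed_eq hgc continuous_const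
    have hDsub : D ⊆ {x : ↥M | g x = 0} := by
      intro d hd
      have hdN : d ∈ N := Submodule.subset_span hd
      show g d = 0
      rw [hg, LinearMap.comp_apply, Submodule.mkQ_apply,
        (Submodule.Quotient.mk_eq_zero N).mpr hdN, map_zero]
    have hall : ∀ x : ↥M, g x = 0 := by
      intro x
      have : x ∈ closure D := hDd x
      exact hclosed.closure_subset ((closure_mono hDsub).trans
        (by rw [hclosed.closure_eq]) this)
    exact hφ (hall m)
  · -- countable dimension → separable
    rintro ⟨s, hs, hspan⟩
    have h1 : TopologicalSpace.IsSeparable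
        ((Submodule.span ℝ s : Submodule ℝ ↥M) : Set ↥M) := hs.isSeparable.span
    rw [hspan] at h1
    rw [← TopologicalSpace.isSeparable_univ_iff]
    simpa using h1
end

section
/- Let (X, ‖·‖) be an extended normed linear space with X = X_fin ⊕ M and flc topology τ_F. Then (X, τ_F) is linearly homeomorphic to the product (X_fin, ‖·‖) × (M, τ_F|_M). -/
open scoped ENNReal Pointwise
open TopologicalSpace

open scoped Topology

private lemma auxBallOpen {X : Type*} [AddCommGroup X] [Module ℝ X]
    (P : SeminormFamily ℝ X (Fin 1)) (c : X) (r : ℝ) :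
    IsOpen[P.moduleFilterBasis.topology] ((P 0).ball c r) := by
  letI tp : TopologicalSpace X := P.moduleFilterBasis.topology
  have hWS : WithSeminorms P := ⟨rfl⟩
  haveI : IsTopologicalAddGroup X := hWS.topologicalAddGroup
  have hpc : Continuous (P 0) := hWS.continuous_seminorm 0
  have hb : (P 0).ball c r = (fun x => (P 0) (x - c)) ⁻¹' Set.Iio r := by
    ext x; simp [Seminorm.mem_ball]
  rw [hb]
  exact (hpc.comp (continuous_id.sub continuous_const)).isOpen_preimage _ isOpen_Iio

private lemma auxMemNhds {X : Type*} (t : TopologicalSpace X) {s : Set X} {x : X}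
    (hs : IsOpen[t] s) (hx : x ∈ s) : s ∈ @nhds X t x :=
  letI := t
  hs.mem_nhds hx

private lemma auxComp {A B C : Type*} (tA : TopologicalSpace A) (tB : TopologicalSpace B)
    (tC : TopologicalSpace C) {f : B → C} {g : A → B}
    (hf : Continuous[tB, tC] f) (hg : Continuous[tA, tB] g) :
    Continuous[tA, tC] (f ∘ g) := by
  rw [continuous_iff_le_induced] at *
  refine hg.trans ?_
  rw [← induced_compose]
  exact induced_mono hf

private lemma auxSubCont {Y X : Type*} [AddCommGroup X] (tY : TopologicalSpace Y)
    (tX : TopologicalSpace X) (hX : @IsTopologicalAddGroup X tX _)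
    {f g : Y → X} (hf : Continuous[tY, tX] f) (hg : Continuous[tY, tX] g) :
    Continuous[tY, tX] fun y => f y - g y := by
  letI := tY; letI := tX; haveI := hX
  exact hf.sub hg

private lemma auxAddCont {Y X : Type*} [AddCommGroup X] (tY : TopologicalSpace Y)
    (tX : TopologicalSpace X) (hX : @IsTopologicalAddGroup X tX _)
    {f g : Y → X} (hf : Continuous[tY, tX] f) (hg : Continuous[tY, tX] g) :
    Continuous[tY, tX] fun y => f y + g y := by
  letI := tY; letI := tX; haveI := hX
  exact hf.add hg

/-- `(X, τ_F)` is linearly homeomorphic to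
`(X_fin, ‖·‖) × (M, τ_F|_M)` via `x ↦ (x_f, x_M)`. -/
theorem stmt10 {X : Type*} [AddCommGroup X] [Module ℝ X]
    (ρ : X → ℝ≥0∞) (hρ : IsExtNorm ρ)
    (t tF : TopologicalSpace X) (ht : t = elcsTopology {ρ})
    (hF : IsFlcTopology t tF)
    (M : Submodule ℝ X) (hM : IsCompl (finSubmodule hρ.1) M) :
    ∃ e : X ≃ₗ[ℝ] (↥(finSubmodule hρ.1) × ↥M),
      (∀ x : X, ((e x).1 : X) + ((e x).2 : X) = x) ∧
      @Continuous X (↥(finSubmodule hρ.1) × ↥M) tF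
        (@instTopologicalSpaceProd _ _ (TopologicalSpace.induced Subtype.val t)
          (TopologicalSpace.induced Subtype.val tF)) (fun x => e x) ∧
      @Continuous (↥(finSubmodule hρ.1) × ↥M) X
        (@instTopologicalSpaceProd _ _ (TopologicalSpace.induced Subtype.val t)
          (TopologicalSpace.induced Subtype.val tF)) tF (fun p => e.symm p) := by
  classical
  set fin := finSubmodule hρ.1 with hfin
  have hmem_iff : ∀ x : X, x ∈ fin ↔ ρ x < ⊤ := fun x => Iff.rfl
  let π : X →ₗ[ℝ] X := fin.subtype.comp (fin.projectionOnto M hM)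
  have hπmem : ∀ x : X, π x ∈ fin := fun x => (fin.projectionOnto M hM x).2
  have hπfin : ∀ x : X, ρ (π x) < ⊤ := fun x => (hmem_iff _).1 (hπmem x)
  have hπeq : ∀ x ∈ fin, π x = x := by
    intro x hx
    have h := Submodule.projectionOnto_apply_left hM ⟨x, hx⟩
    exact congrArg (Subtype.val) h
  have hπM : ∀ y ∈ M, π y = 0 := by
    intro y hy
    simp [π, Submodule.projectionOnto_apply_of_mem_right hM hy]
  have hπle : ∀ x : X, ρ (π x) ≤ ρ x := by
    intro x
    by_cases hx : ρ x < ⊤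
    · rw [hπeq x ((hmem_iff _).2 hx)]
    · exact le_top.trans (not_lt.mp hx)
  -- The real-valued seminorm `p x = (ρ (π x)).toReal`
  let p : Seminorm ℝ X := Seminorm.of (fun x => (ρ (π x)).toReal)
    (fun x y => by
      have h1 : ρ (π (x + y)) ≤ ρ (π x) + ρ (π y) := by
        rw [map_add]; exact hρ.1.2 _ _
      exact ENNReal.toReal_le_add h1 (hπfin x).ne (hπfin y).ne)
    (fun a x => by
      have h1 : ρ (π (a • x)) = ENNReal.ofReal |a| * ρ (π x) := by
        rw [map_smul]; exact hρ.1.1 a (π x)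
      simp only [h1, ENNReal.toReal_mul, ENNReal.toReal_ofReal (abs_nonneg a),
        Real.norm_eq_abs])
  have hp_apply : ∀ x : X, p x = (ρ (π x)).toReal := fun _ => rfl
  let P : SeminormFamily ℝ X (Fin 1) := fun _ => p
  let tp : TopologicalSpace X := P.moduleFilterBasis.topology
  have hWS : WithSeminorms (topology := tp) P := ⟨rfl⟩
  -- ρ-balls are t-open
  have hball_open : ∀ (c : X) (ε : ℝ≥0∞), 0 < ε → IsOpen[t] {x | ρ (x - c) < ε} := by
    intro c ε hε
    rw [ht]
    exact TopologicalSpace.isOpen_generateFrom_of_mem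
      ⟨ρ, rfl, c, ε, hε, rfl⟩
  -- t is finer than tp
  have h_t_le_tp : t ≤ tp := by
    rw [le_iff_nhds]
    intro x
    have hbas := hWS.hasBasis_ball (x := x)
    rw [hbas.ge_iff]
    rintro ⟨s, r⟩ hr
    have hxmem : x ∈ {y | ρ (y - x) < ENNReal.ofReal r} := by
      show ρ (x - x) < _
      rw [sub_self, hρ.1.map_zero]
      exact ENNReal.ofReal_pos.mpr hr
    refine Filter.mem_of_superset
      (auxMemNhds t (hball_open x _ (ENNReal.ofReal_pos.mpr hr)) hxmem) ?_
    intro y hy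
    have h2 : ρ (π (y - x)) < ENNReal.ofReal r := lt_of_le_of_lt (hπle _) hy
    have h3 : p (y - x) < r :=
      (ENNReal.lt_ofReal_iff_toReal_lt (hπfin _).ne).mp h2
    have h4 : (s.sup P) (y - x) ≤ p (y - x) := by
      have hle : s.sup P ≤ p := Finset.sup_le fun i _ => le_refl p
      exact Seminorm.le_def.mp hle _
    exact (Seminorm.mem_ball _).mpr (lt_of_le_of_lt h4 h3)
  -- p-balls are tp-open
  have hball_tp_open : ∀ (c : X) (r : ℝ), IsOpen[tp] (p.ball c r) :=
    fun c r => auxBallOpen P c r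
  -- π is continuous from tp to t
  have hπ_cont : Continuous[tp, t] π := by
    rw [ht]
    rw [elcsTopology, continuous_generateFrom_iff]
    rintro s ⟨ρ', hρ', c, ε, hε, rfl⟩
    rw [Set.mem_singleton_iff] at hρ'
    rw [hρ']
    have hpre : π ⁻¹' {x | ρ (x - c) < ε} = {x | ρ (π x - c) < ε} := rfl
    rw [hpre]
    by_cases hc : c ∈ fin
    · have hshift : ∀ x : X, π x - c = π (x - c) := by
        intro x
        rw [map_sub, hπeq c hc]
      simp only [hshift]
      rcases eq_or_ne ε ⊤ with hεt | hεt
      · have huniv : {x | ρ (π (x - c)) < ε} = Set.univ := by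
          ext x
          simp only [Set.mem_setOf_eq, Set.mem_univ, iff_true, hεt]
          exact hπfin (x - c)
        rw [huniv]
        exact @isOpen_univ X tp
      · have hb : {x | ρ (π (x - c)) < ε} = p.ball c ε.toReal := by
          ext x
          rw [Seminorm.mem_ball, hp_apply, Set.mem_setOf_eq,
            ← ENNReal.toReal_lt_toReal (hπfin (x - c)).ne hεt]
        rw [hb]
        exact hball_tp_open c ε.toReal
    · have hempty : {x | ρ (π x - c) < ε} = ∅ := by
        ext x
        simp only [Set.mem_setOf_eq, Set.mem_empty_iff_false, iff_false, not_lt]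
        by_contra hlt
        push_neg at hlt
        have hfin' : π x - c ∈ fin := (hmem_iff _).2 (hlt.trans_le le_top)
        exact hc (by simpa using fin.sub_mem (hπmem x) hfin')
      rw [hempty]
      exact @isOpen_empty X tp
  -- tF is coarser than tp, by minimality
  have htF_le_tp : tF ≤ tp :=
    hF.2.2.2.2 tp h_t_le_tp (hWS.topologicalAddGroup) (hWS.continuousSMul)
      (hWS.toLocallyConvexSpace)
  have hπ_tF_t : Continuous[tF, t] π := continuous_le_dom htF_le_tp hπ_cont
  have hid_t_tF : Continuous[t, tF] (id : X → X) := continuous_id_iff_le.mpr hF.1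
  have hπ_tF_tF : Continuous[tF, tF] π := by
    have h := auxComp tF t tF hid_t_tF hπ_tF_t
    exact h
  -- the equivalence
  refine ⟨(Submodule.prodEquivOfIsCompl fin M hM).symm, ?_, ?_, ?_⟩
  · intro x
    have h1 := (Submodule.prodEquivOfIsCompl fin M hM).apply_symm_apply x
    rw [Submodule.coe_prodEquivOfIsCompl'] at h1
    exact h1
  · -- forward continuity
    have hkey : ∀ x : X,
        (((Submodule.prodEquivOfIsCompl fin M hM).symm x).1 : X)
        + (((Submodule.prodEquivOfIsCompl fin M hM).symm x).2 : X) = x := by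
      intro x
      have h1 := (Submodule.prodEquivOfIsCompl fin M hM).apply_symm_apply x
      rw [Submodule.coe_prodEquivOfIsCompl'] at h1
      exact h1
    have hfst : ∀ x : X,
        ((((Submodule.prodEquivOfIsCompl fin M hM).symm x).1 : X)) = π x := by
      intro x
      conv_rhs => rw [← hkey x]
      rw [map_add, hπeq _ (((Submodule.prodEquivOfIsCompl fin M hM).symm x).1).2,
        hπM _ (((Submodule.prodEquivOfIsCompl fin M hM).symm x).2).2, add_zero]
    have hsnd : ∀ x : X,
        ((((Submodule.prodEquivOfIsCompl fin M hM).symm x).2 : X)) = x - π x := by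
      intro x
      rw [eq_sub_iff_add_eq, add_comm, ← hfst x]
      exact hkey x
    have hc1 : Continuous[tF, TopologicalSpace.induced Subtype.val t]
        (fun x => ((Submodule.prodEquivOfIsCompl fin M hM).symm x).1) := by
      rw [continuous_induced_rng]
      have heq : (Subtype.val ∘ fun x =>
          ((Submodule.prodEquivOfIsCompl fin M hM).symm x).1) = fun x => π x :=
        funext hfst
      rw [heq]
      exact hπ_tF_t
    have hc2 : Continuous[tF, TopologicalSpace.induced Subtype.val tF]
        (fun x => ((Submodule.prodEquivOfIsCompl fin M hM).symm x).2) := by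
      rw [continuous_induced_rng]
      have heq : (Subtype.val ∘ fun x =>
          ((Submodule.prodEquivOfIsCompl fin M hM).symm x).2) = fun x => x - π x :=
        funext hsnd
      rw [heq]
      exact auxSubCont tF tF hF.2.1 (@continuous_id X tF) hπ_tF_tF
    exact @Continuous.prodMk ↥fin ↥M X (TopologicalSpace.induced Subtype.val t)
      (TopologicalSpace.induced Subtype.val tF) tF _ _ hc1 hc2
  · -- backward continuity
    have heq : (fun q : ↥fin × ↥M =>
        ((Submodule.prodEquivOfIsCompl fin M hM).symm.symm q : X))
        = fun q => (q.1 : X) + (q.2 : X) := by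
      funext q
      rw [LinearEquiv.symm_symm, Submodule.coe_prodEquivOfIsCompl']
    rw [heq]
    letI tprod : TopologicalSpace (↥fin × ↥M) :=
      @instTopologicalSpaceProd _ _ (TopologicalSpace.induced Subtype.val t)
        (TopologicalSpace.induced Subtype.val tF)
    have hcfst : Continuous[tprod, tF] (fun q : ↥fin × ↥M => (q.1 : X)) := by
      have h1 := auxComp tprod (TopologicalSpace.induced Subtype.val t) t
          (@continuous_induced_dom ↥fin X Subtype.val t)
          (@continuous_fst ↥fin ↥M (TopologicalSpace.induced Subtype.val t)
            (TopologicalSpace.induced Subtype.val tF))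
      have h2 := auxComp tprod t tF hid_t_tF h1
      exact h2
    have hcsnd : Continuous[tprod, tF] (fun q : ↥fin × ↥M => (q.2 : X)) := by
      have h1 := auxComp tprod (TopologicalSpace.induced Subtype.val tF) tF
        (@continuous_induced_dom ↥M X Subtype.val tF)
        (@continuous_snd ↥fin ↥M (TopologicalSpace.induced Subtype.val t)
          (TopologicalSpace.induced Subtype.val tF))
      exact h1
    exact auxAddCont tprod tF hF.2.1 hcfst hcsnd
end

section
/- Let (X, ‖·‖) be an extended normed linear space with flc topology τ_F, and let B_{X*} = {f ∈ X* : ‖f‖_op ≤ 1} where ‖f‖_op = sup{|f(x)| : ‖x‖ ≤ 1}. Then B_{X*} with the weak* topology is metrizable if and only if (X, τ_F) is separable. -/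
open scoped ENNReal Pointwise
open TopologicalSpace

section AuxLemmas

variable {X : Type*} [AddCommGroup X] [Module ℝ X]

lemma extSeminorm_neg {ρ : X → ℝ≥0∞} (h : IsExtSeminorm ρ) (x : X) : ρ (-x) = ρ x := by
  have h0 := h.1 (-1) x
  simpa using h0

/-- L0: neighborhoods of zero in the elcs topology contain balls. -/
lemma nhds_zero_elcs {ρ : X → ℝ≥0∞} (h : IsExtSeminorm ρ) {s : Set X}
    (hs : s ∈ @nhds X (elcsTopology {ρ}) 0) :
    ∃ ε : ℝ≥0∞, 0 < ε ∧ {z : X | ρ z < ε} ⊆ s := by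
  rw [elcsTopology, TopologicalSpace.nhds_generateFrom] at hs
  set F : Filter X := ⨅ e : {e : ℝ≥0∞ // 0 < e}, Filter.principal {z : X | ρ z < e.1} with hF
  have hle : F ≤ ⨅ u ∈ {u : Set X | 0 ∈ u ∧
      u ∈ {v | ∃ σ ∈ ({ρ} : Set (X → ℝ≥0∞)), ∃ c : X, ∃ ε : ℝ≥0∞, 0 < ε ∧
        v = {x | σ (x - c) < ε}}}, Filter.principal u := by
    refine le_iInf₂ fun u hu => ?_
    obtain ⟨hu0, σ, hσ, c, ε, hε, rfl⟩ := hu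
    rw [Set.mem_singleton_iff] at hσ
    subst hσ
    have hc : σ (0 - c) < ε := hu0
    rw [zero_sub] at hc
    have hcne : σ (-c) ≠ ⊤ := hc.ne_top
    have hpos : 0 < ε - σ (-c) := tsub_pos_iff_lt.2 hc
    refine iInf_le_of_le ⟨ε - σ (-c), hpos⟩ (Filter.principal_mono.2 fun z hz => ?_)
    have hz' : σ z < ε - σ (-c) := hz
    have h1 : σ (z - c) ≤ σ z + σ (-c) := by
      rw [sub_eq_add_neg]
      exact h.2 z (-c)
    have h2 : σ z + σ (-c) < (ε - σ (-c)) + σ (-c) :=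
      ENNReal.add_lt_add_right hcne hz'
    rw [tsub_add_cancel_of_le hc.le] at h2
    exact lt_of_le_of_lt h1 h2
  have hsF : s ∈ F := hle hs
  have hdir : Directed (· ≥ ·) fun e : {e : ℝ≥0∞ // 0 < e} =>
      Filter.principal {z : X | ρ z < e.1} := by
    rintro ⟨a, ha⟩ ⟨b, hb⟩
    refine ⟨⟨min a b, lt_min ha hb⟩,
      Filter.principal_mono.2 fun z hz => ?_, Filter.principal_mono.2 fun z hz => ?_⟩
    · have hz' : ρ z < min a b := hz
      exact lt_of_lt_of_le hz' (min_le_left _ _)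
    · have hz' : ρ z < min a b := hz
      exact lt_of_lt_of_le hz' (min_le_right _ _)
  haveI : Nonempty {e : ℝ≥0∞ // 0 < e} := ⟨⟨1, zero_lt_one⟩⟩
  rw [hF, Filter.mem_iInf_of_directed hdir] at hsF
  obtain ⟨⟨ε, hε⟩, hsub⟩ := hsF
  exact ⟨ε, hε, hsub⟩

/-- L4: a pointwise bound by the extended norm implies continuity. -/
lemma continuous_of_elcs_bound {ρ : X → ℝ≥0∞} (h : IsExtSeminorm ρ) (f : X →ₗ[ℝ] ℝ)
    (C : ℝ≥0∞) (hC : C ≠ ⊤) (hb : ∀ z, ENNReal.ofReal |f z| ≤ C * ρ z) :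
    @Continuous X ℝ (elcsTopology {ρ}) _ f := by
  letI : TopologicalSpace X := elcsTopology {ρ}
  rw [continuous_def]
  intro s hs
  rw [isOpen_iff_forall_mem_open]
  intro x₀ hx₀
  obtain ⟨δ, hδ, hball⟩ := Metric.isOpen_iff.1 hs (f x₀) hx₀
  set r : ℝ≥0∞ := ENNReal.ofReal (δ / 2) / (C + 1) with hr
  have hrpos : 0 < r :=
    ENNReal.div_pos (by simp [ENNReal.ofReal_pos]; linarith) (by simp [hC, ENNReal.add_eq_top])
  refine ⟨{x | ρ (x - x₀) < r}, fun z hz => ?_, ?_, by simp [h.map_zero, hrpos]⟩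
  · -- z in ball implies f z ∈ s
    apply hball
    have h1 : ENNReal.ofReal |f (z - x₀)| ≤ C * ρ (z - x₀) := hb _
    have h2 : C * ρ (z - x₀) ≤ (C + 1) * r := by
      refine mul_le_mul' (le_self_add) (le_of_lt hz)
    have h3 : (C + 1) * r = ENNReal.ofReal (δ / 2) := by
      rw [hr, ENNReal.mul_div_cancel' (by simp) (by simp [hC, ENNReal.add_eq_top])]
    have h4 : ENNReal.ofReal |f (z - x₀)| ≤ ENNReal.ofReal (δ / 2) := by
      rw [← h3]; exact le_trans h1 h2
    rw [ENNReal.ofReal_le_ofReal_iff (by linarith)] at h4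
    have h5 : |f z - f x₀| ≤ δ / 2 := by rwa [← map_sub]
    rw [Metric.mem_ball, Real.dist_eq]
    linarith
  · exact TopologicalSpace.isOpen_generateFrom_of_mem
      ⟨ρ, Set.mem_singleton ρ, x₀, r, hrpos, rfl⟩

end AuxLemmas
section AuxLemmas2

variable {X : Type*} [AddCommGroup X] [Module ℝ X]

/-- L5: continuity implies a pointwise bound by the extended norm. -/
lemma bound_of_elcs_continuous {ρ : X → ℝ≥0∞} (h : IsExtNorm ρ) (f : X →ₗ[ℝ] ℝ)
    (hf : @Continuous X ℝ (elcsTopology {ρ}) _ f) :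
    ∃ c : ℝ, 0 < c ∧ ∀ z, ENNReal.ofReal |f z| ≤ ENNReal.ofReal c * ρ z := by
  letI : TopologicalSpace X := elcsTopology {ρ}
  have h0 : f 0 = 0 := map_zero f
  have hmem : f ⁻¹' (Metric.ball (0 : ℝ) 1) ∈ @nhds X (elcsTopology {ρ}) 0 := by
    have := hf.continuousAt (x := 0)
    rw [ContinuousAt, h0] at this
    exact this (Metric.ball_mem_nhds _ one_pos)
  obtain ⟨ε, hε, hball⟩ := nhds_zero_elcs h.1 hmem
  set e : ℝ := (min ε 1).toReal with he
  have hepos : 0 < e := by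
    rw [he]
    exact ENNReal.toReal_pos (ne_of_gt (lt_min hε zero_lt_one))
      (fun hh => by simp [min_eq_top] at hh)
  have hofe : ENNReal.ofReal e = min ε 1 := by
    rw [he]
    exact ENNReal.ofReal_toReal (fun hh => by simp [min_eq_top] at hh)
  refine ⟨2 / e, by positivity, fun z => ?_⟩
  rcases eq_or_ne (ρ z) ⊤ with hz | hz
  · rw [hz, ENNReal.mul_top (by simp [ENNReal.ofReal_eq_zero]; positivity)]
    exact le_top
  rcases eq_or_ne (ρ z) 0 with hz0 | hz0
  · have : z = 0 := h.2 z hz0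
    subst this
    simp [h0]
  -- main case
  set r : ℝ := (ρ z).toReal with hr
  have hrpos : 0 < r := ENNReal.toReal_pos hz0 hz
  set a : ℝ := 2 * r / e with ha
  have hapos : 0 < a := by positivity
  have key : ρ (a⁻¹ • z) < ε := by
    rw [h.1.1]
    have h1 : |a⁻¹| = a⁻¹ := abs_of_pos (by positivity)
    rw [h1]
    have h2 : a⁻¹ = e / (2 * r) := by rw [ha]; field_simp
    have h3 : ENNReal.ofReal a⁻¹ * ρ z = ENNReal.ofReal (e / 2) := by
      rw [h2, ← ENNReal.ofReal_toReal hz, ← hr, ← ENNReal.ofReal_mul (by positivity)]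
      congr 1
      field_simp
    rw [h3]
    calc ENNReal.ofReal (e / 2) < ENNReal.ofReal e := by
          rw [ENNReal.ofReal_lt_ofReal_iff hepos]; linarith
      _ = min ε 1 := hofe
      _ ≤ ε := min_le_left _ _
  have hfz : |f (a⁻¹ • z)| < 1 := by
    have h5 := hball key
    rw [Set.mem_preimage, Metric.mem_ball, Real.dist_eq, sub_zero] at h5
    exact h5
  rw [map_smul, smul_eq_mul, abs_mul, abs_of_pos (show (0:ℝ) < a⁻¹ by positivity)] at hfz
  have hfz2 : |f z| ≤ a := by
    have h6 := mul_lt_mul_of_pos_left hfz hapos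
    rw [← mul_assoc, mul_inv_cancel₀ (ne_of_gt hapos), one_mul, mul_one] at h6
    exact h6.le
  calc ENNReal.ofReal |f z| ≤ ENNReal.ofReal a := ENNReal.ofReal_le_ofReal hfz2
    _ = ENNReal.ofReal (2 / e) * ρ z := by
        rw [← ENNReal.ofReal_toReal hz, ← hr, ← ENNReal.ofReal_mul (by positivity)]
        congr 1
        rw [ha]; field_simp

/-- L3: membership in the dual unit ball gives the pointwise bound `|f z| ≤ ρ z`. -/
lemma unit_ball_bound {ρ : X → ℝ≥0∞} (h : IsExtNorm ρ) (f : X →ₗ[ℝ] ℝ)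
    (hf : ∀ x : X, ρ x ≤ 1 → |f x| ≤ 1) :
    ∀ z : X, ENNReal.ofReal |f z| ≤ ρ z := by
  intro z
  rcases eq_or_ne (ρ z) ⊤ with hz | hz
  · rw [hz]; exact le_top
  rcases eq_or_ne (ρ z) 0 with hz0 | hz0
  · have : z = 0 := h.2 z hz0
    subst this
    simp [map_zero]
  set r : ℝ := (ρ z).toReal with hr
  have hrpos : 0 < r := ENNReal.toReal_pos hz0 hz
  have key : ∀ s : ℝ, r < s → |f z| ≤ s := by
    intro s hs
    have hspos : 0 < s := hrpos.trans hs
    have h1 : ρ (s⁻¹ • z) ≤ 1 := by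
      rw [h.1.1, abs_of_pos (by positivity), ← ENNReal.ofReal_toReal hz, ← hr,
        ← ENNReal.ofReal_mul (by positivity)]
      rw [ENNReal.ofReal_le_one]
      rw [inv_mul_le_one₀ hspos]
      exact hs.le
    have h2 := hf _ h1
    rw [map_smul, smul_eq_mul, abs_mul, abs_of_pos (show (0:ℝ) < s⁻¹ by positivity)] at h2
    have h6 := mul_le_mul_of_nonneg_left h2 hspos.le
    rw [← mul_assoc, mul_inv_cancel₀ (ne_of_gt hspos), one_mul, mul_one] at h6
    exact h6
  have h3 : |f z| ≤ r := by
    by_contra hcon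
    push_neg at hcon
    have := key ((r + |f z|) / 2) (by linarith)
    linarith
  calc ENNReal.ofReal |f z| ≤ ENNReal.ofReal r := ENNReal.ofReal_le_ofReal h3
    _ = ρ z := by rw [hr, ENNReal.ofReal_toReal hz]

/-- L1: every `t`-continuous linear functional is `tF`-continuous. -/
lemma dual_continuous_flc {t tF : TopologicalSpace X} (hF : IsFlcTopology t tF)
    (f : X →ₗ[ℝ] ℝ) (hf : @Continuous X ℝ t _ f) : @Continuous X ℝ tF _ f := by
  obtain ⟨hle, hg, hsm, hlc, hmax⟩ := hF
  set ti : TopologicalSpace X := TopologicalSpace.induced f inferInstance with hti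
  have h1 : @IsTopologicalAddGroup X ti _ := topologicalAddGroup_induced f
  have h2 : @ContinuousSMul ℝ X _ _ ti := continuousSMul_induced f
  have h3 : @LocallyConvexSpace ℝ X _ _ _ _ ti := LocallyConvexSpace.induced f
  have h4 : t ≤ ti := continuous_iff_le_induced.1 hf
  have h5 : tF ≤ tF ⊓ ti := by
    refine hmax _ (le_inf hle h4) (topologicalAddGroup_inf hg h1)
      (@continuousSMul_inf ℝ X _ _ _ _ hsm h2) (LocallyConvexSpace.inf hlc h3)
  have h6 : tF ≤ ti := h5.trans inf_le_right
  exact continuous_le_dom h6 continuous_induced_dom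

end AuxLemmas2
section Dir1

variable {X : Type*} [AddCommGroup X] [Module ℝ X]

set_option maxHeartbeats 1000000 in
set_option synthInstance.maxHeartbeats 400000 in
lemma stmt11_dir1 (ρ : X → ℝ≥0∞) (hρ : IsExtNorm ρ)
    (t tF : TopologicalSpace X) (ht : t = elcsTopology {ρ})
    (hF : IsFlcTopology t tF)
    (hm : @TopologicalSpace.MetrizableSpace
        {f : ↥(dualSubmodule t) // ∀ x : X, ρ x ≤ 1 → |f.1 x| ≤ 1}
        (TopologicalSpace.induced Subtype.val (weakStarTopology t))) :
    @TopologicalSpace.SeparableSpace X tF := by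
  classical
  letI tD : TopologicalSpace ↥(dualSubmodule t) := weakStarTopology t
  set Btype := {f : ↥(dualSubmodule t) // ∀ x : X, ρ x ≤ 1 → |f.1 x| ≤ 1} with hBtype
  letI : TopologicalSpace Btype := TopologicalSpace.induced Subtype.val tD
  haveI : TopologicalSpace.MetrizableSpace Btype := hm
  set pt0 : Btype := ⟨⟨0, (dualSubmodule t).zero_mem⟩, by intro x _; simp⟩ with hpt0
  -- neighborhood filter of the zero functional
  have hnhds : @nhds Btype _ pt0 =
      ⨅ x : X, Filter.comap (fun f : Btype => f.1.1 x) (nhds (0 : ℝ)) := by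
    have e1 : @nhds Btype _ pt0 = Filter.comap Subtype.val (@nhds _ tD pt0.val) :=
      nhds_induced _ _
    have e2 : @nhds _ tD pt0.val =
        ⨅ x : X, Filter.comap (fun f : ↥(dualSubmodule t) => f.1 x) (nhds (0 : ℝ)) := by
      rw [show tD = weakStarTopology t from rfl, weakStarTopology, nhds_iInf]
      refine iInf_congr fun x => ?_
      rw [nhds_induced]
      rfl
    rw [e1, e2, Filter.comap_iInf]
    exact iInf_congr fun x => Filter.comap_comap
  -- countable basis
  obtain ⟨U, hU⟩ := (@nhds Btype _ pt0).exists_antitone_basis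
  have hUn : ∀ n, U n ∈ @nhds Btype _ pt0 := fun n => hU.1.mem_of_mem trivial
  have key : ∀ n, ∃ I : Set X, I.Finite ∧
      ∀ f : Btype, (∀ x ∈ I, f.1.1 x = 0) → f ∈ U n := by
    intro n
    have hn := hUn n
    rw [hnhds, Filter.mem_iInf'] at hn
    obtain ⟨I, hIfin, V, hV, hVuniv, -, hUeq⟩ := hn
    refine ⟨I, hIfin, fun f hf => ?_⟩
    rw [hUeq]
    refine Set.mem_iInter.2 fun x => ?_
    by_cases hx : x ∈ I
    · obtain ⟨W, hW, hWsub⟩ := Filter.mem_comap.1 (hV x)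
      apply hWsub
      rw [Set.mem_preimage, hf x hx]
      exact mem_of_mem_nhds hW
    · rw [hVuniv x hx]; trivial
  choose I hIfin hIkey using key
  set D₀ : Set X := ⋃ n, I n with hD₀
  have hD₀c : D₀.Countable := Set.countable_iUnion fun n => (hIfin n).countable
  -- any continuous functional vanishing on D₀ vanishes
  have hvan : ∀ g : X →ₗ[ℝ] ℝ, @Continuous X ℝ t _ (fun x => g x) →
      (∀ d ∈ D₀, g d = 0) → g = 0 := by
    intro g hgc hgz
    obtain ⟨c, hc, hcb⟩ := bound_of_elcs_continuous hρ g (by rwa [← ht])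
    set g' : X →ₗ[ℝ] ℝ := c⁻¹ • g with hg'
    have hg'c : @Continuous X ℝ t _ (fun x => g' x) := by
      letI : TopologicalSpace X := t
      have he : (fun x => g' x) = fun x => c⁻¹ * g x := by
        funext x; simp [hg']
      rw [he]
      exact continuous_const.mul hgc
    have hg'B : ∀ x : X, ρ x ≤ 1 → |g' x| ≤ 1 := by
      intro x hx
      have h1 : ENNReal.ofReal |g x| ≤ ENNReal.ofReal c := by
        calc ENNReal.ofReal |g x| ≤ ENNReal.ofReal c * ρ x := hcb x
          _ ≤ ENNReal.ofReal c * 1 := mul_le_mul' le_rfl hx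
          _ = ENNReal.ofReal c := mul_one _
      rw [ENNReal.ofReal_le_ofReal_iff hc.le] at h1
      have : |g' x| = c⁻¹ * |g x| := by
        simp [hg', abs_mul, abs_of_pos (inv_pos.2 hc)]
      rw [this]
      calc c⁻¹ * |g x| ≤ c⁻¹ * c := by
            exact mul_le_mul_of_nonneg_left h1 (inv_pos.2 hc).le
        _ = 1 := inv_mul_cancel₀ (ne_of_gt hc)
    set fB : Btype := ⟨⟨g', hg'c⟩, hg'B⟩ with hfB
    have hBU : ∀ n, fB ∈ U n := by
      intro n
      refine hIkey n fB fun x hx => ?_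
      have hxD : x ∈ D₀ := Set.mem_iUnion.2 ⟨n, hx⟩
      show g' x = 0
      simp [hg', hgz x hxD]
    have hfB0 : fB = pt0 := by
      by_contra hne
      obtain ⟨O, hO, hOp, hOf⟩ := t1Space_iff_exists_open.1 inferInstance
        (Ne.symm hne : pt0 ≠ fB)
      obtain ⟨n, hn⟩ := hU.1.mem_iff.1 (hO.mem_nhds hOp)
      exact hOf (hn.2 (hBU n))
    have : g' = 0 := congrArg (fun f : Btype => f.1.1) hfB0
    have hgg : g = c • g' := by
      rw [hg', smul_smul, mul_inv_cancel₀ (ne_of_gt hc), one_smul]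
    rw [hgg, this, smul_zero]
  -- pass to the flc topology
  letI : TopologicalSpace X := tF
  haveI : IsTopologicalAddGroup X := hF.2.1
  haveI : ContinuousSMul ℝ X := hF.2.2.1
  haveI : LocallyConvexSpace ℝ X := hF.2.2.2.1
  set S : Submodule ℝ X := Submodule.span ℝ D₀ with hS
  have hconv : Convex ℝ (S : Set X) := fun x hx y hy a b _ _ _ =>
    S.add_mem (S.smul_mem a hx) (S.smul_mem b hy)
  have hclos : closure (S : Set X) = Set.univ := by
    by_contra hne
    obtain ⟨x, hx⟩ := (Set.ne_univ_iff_exists_notMem _).1 hne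
    obtain ⟨f, u, hfu, hux⟩ :=
      geometric_hahn_banach_closed_point hconv.closure isClosed_closure hx
    have hf0 : ∀ y ∈ S, f y = 0 := by
      intro y hy
      by_contra hne'
      have h2 : ∀ r : ℝ, r * f y < u := fun r => by
        have := hfu (r • y) (subset_closure (S.smul_mem r hy))
        simpa [map_smul] using this
      have h3 := h2 ((u + 1) / f y)
      rw [div_mul_cancel₀ _ hne'] at h3
      linarith
    have hu0 : 0 < u := by
      have := hfu 0 (subset_closure S.zero_mem)
      simpa using this
    have hft : @Continuous X ℝ t _ (fun x => f x) :=
      continuous_le_dom hF.1 f.continuous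
    have := hvan f.toLinearMap hft fun d hd => hf0 d (Submodule.subset_span hd)
    have hfx : f x = 0 := by
      rw [show f x = f.toLinearMap x from rfl, this]; rfl
    rw [hfx] at hux
    linarith
  have hsp : TopologicalSpace.IsSeparable (S : Set X) := hD₀c.isSeparable.span
  have hcl : TopologicalSpace.IsSeparable (Set.univ : Set X) := by
    rw [← hclos]
    exact hsp.closure
  exact TopologicalSpace.isSeparable_univ_iff.1 hcl

end Dir1
section Dir2Functional

variable {X : Type*} [AddCommGroup X] [Module ℝ X]

/-- Given a submodule at positive `ρ`-distance from `x`, there is a bounded linear functional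
vanishing on the submodule and nonzero at `x`. -/
lemma exists_separating_functional {ρ : X → ℝ≥0∞} (hρ : IsExtNorm ρ)
    (M : Submodule ℝ X) (x : X) (ε : ℝ≥0∞) (hε : 0 < ε)
    (hd : ∀ y ∈ M, ε ≤ ρ (x - y)) :
    ∃ f : X →ₗ[ℝ] ℝ, (∀ y ∈ M, f y = 0) ∧ f x ≠ 0 ∧
      ∃ c : ℝ≥0∞, c ≠ ⊤ ∧ ∀ z, ENNReal.ofReal |f z| ≤ c * ρ z := by
  classical
  set Xf : Submodule ℝ X := finSubmodule hρ.1 with hXf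
  by_cases hcase : x ∈ M ⊔ Xf
  · -- Case B : x = m + u with m ∈ M, u ∈ Xf
    obtain ⟨m, hm, u, hu, hmu⟩ := Submodule.mem_sup.1 hcase
    -- the normed space structure on Xf
    letI : NormedAddCommGroup ↥Xf := AddGroupNorm.toNormedAddCommGroup
      { toFun := fun v => (ρ v.1).toReal
        map_zero' := by simp [hρ.1.map_zero]
        add_le' := by
          rintro ⟨a, ha⟩ ⟨b, hb⟩
          have ha' : ρ a ≠ ⊤ := ne_of_lt ha
          have hb' : ρ b ≠ ⊤ := ne_of_lt hb
          have h1 : ρ (a + b) ≤ ρ a + ρ b := hρ.1.2 a b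
          have h2 : ρ (a + b) ≠ ⊤ := ne_top_of_le_ne_top (by simp [ha', hb']) h1
          calc (ρ (a + b)).toReal ≤ (ρ a + ρ b).toReal :=
                ENNReal.toReal_mono (by simp [ha', hb']) h1
            _ = (ρ a).toReal + (ρ b).toReal := ENNReal.toReal_add ha' hb'
        neg' := by
          rintro ⟨a, ha⟩
          simp [extSeminorm_neg hρ.1]
        eq_zero_of_map_eq_zero' := by
          rintro ⟨a, ha⟩ h
          have : ρ a = 0 := by
            have := (ENNReal.toReal_eq_zero_iff _).1 h
            rcases this with h' | h'
            · exact h'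
            · exact absurd h' (ne_of_lt ha)
          exact Subtype.ext (hρ.2 a this) }
    have hnorm : ∀ v : ↥Xf, ‖v‖ = (ρ v.1).toReal := fun _ => rfl
    letI : NormedSpace ℝ ↥Xf := by
      refine ⟨fun a v => ?_⟩
      rw [hnorm, hnorm]
      have : ((a • v : ↥Xf) : X) = a • (v : X) := rfl
      rw [show ρ ((a • v : ↥Xf) : X) = ENNReal.ofReal |a| * ρ v.1 by rw [this, hρ.1.1]]
      rw [ENNReal.toReal_mul, ENNReal.toReal_ofReal (abs_nonneg a)]
      simp [Real.norm_eq_abs]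
    set SE : Submodule ℝ ↥Xf := M.comap Xf.subtype with hSE
    set u' : ↥Xf := ⟨u, hu⟩ with hu'
    set r : ℝ := (min ε 1).toReal with hr
    have hrpos : 0 < r :=
      ENNReal.toReal_pos (ne_of_gt (lt_min hε zero_lt_one))
        (fun hh => by simp [min_eq_top] at hh)
    have hdist : ∀ w ∈ SE, r ≤ ‖u' - w‖ := by
      intro w hw
      have hmem : u - w.1 ∈ Xf := Xf.sub_mem hu w.2
      have h1 : ε ≤ ρ (u - w.1) := by
        have h2 : u - w.1 = x - (m + w.1) := by
          rw [← hmu]; abel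
        rw [h2]
        exact hd _ (M.add_mem hm hw)
      have h3 : ρ (u - w.1) ≠ ⊤ := ne_of_lt hmem
      rw [hnorm]
      have : ((u' - w : ↥Xf) : X) = u - w.1 := rfl
      rw [this, hr]
      exact ENNReal.toReal_mono h3 (le_trans (min_le_left _ _) h1)
    set Scl : Submodule ℝ ↥Xf := SE.topologicalClosure with hScl
    haveI hclosed : IsClosed (Scl : Set ↥Xf) := SE.isClosed_topologicalClosure
    have hdist' : ∀ w ∈ Scl, r ≤ ‖u' - w‖ := by
      intro w hw
      have hC : IsClosed {w : ↥Xf | r ≤ ‖u' - w‖} := by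
        have : Continuous fun w : ↥Xf => ‖u' - w‖ :=
          (continuous_const.sub continuous_id).norm
        exact IsClosed.preimage this isClosed_Ici
      have hsub : (SE : Set ↥Xf) ⊆ {w : ↥Xf | r ≤ ‖u' - w‖} := fun w hw => hdist w hw
      have := closure_minimal hsub hC
      exact this (by exact hw)
    have hu'ncl : u' ∉ Scl := by
      intro hmem
      have := hdist' u' hmem
      simp at this
      linarith
    have hne0 : Submodule.Quotient.mk (p := Scl) u' ≠ 0 := by
      rw [Ne, Submodule.Quotient.mk_eq_zero]
      exact hu'ncl
    haveI : Nontrivial (↥Xf ⧸ Scl) := ⟨⟨Submodule.Quotient.mk u', 0, hne0⟩⟩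
    obtain ⟨g, hgnorm, hgval⟩ := exists_dual_vector ℝ (Submodule.Quotient.mk (p := Scl) u') (norm_ne_zero_iff.2 hne0)
    have hgu : g (Submodule.Quotient.mk u') ≠ 0 := by
      rw [hgval]
      have h0 : (0:ℝ) < ‖Submodule.Quotient.mk (p := Scl) u'‖ := norm_pos_iff.2 hne0
      exact_mod_cast ne_of_gt h0
    -- the functional on Xf
    set hE : ↥Xf →ₗ[ℝ] ℝ := g.toLinearMap ∘ₗ Scl.mkQ with hhE
    have hEbound : ∀ v : ↥Xf, |hE v| ≤ ‖g‖ * ‖v‖ := by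
      intro v
      have h1 : |hE v| = ‖g (Submodule.Quotient.mk v)‖ := by
        simp [hhE, Real.norm_eq_abs, Submodule.mkQ_apply]
      rw [h1]
      calc ‖g (Submodule.Quotient.mk v)‖ ≤ ‖g‖ * ‖(Submodule.Quotient.mk v : ↥Xf ⧸ Scl)‖ :=
            g.le_opNorm _
        _ ≤ ‖g‖ * ‖v‖ := by
            refine mul_le_mul_of_nonneg_left ?_ (norm_nonneg g)
            exact Submodule.Quotient.norm_mk_le _ v
    have hESE : ∀ v ∈ SE, hE v = 0 := by
      intro v hv
      have : Submodule.Quotient.mk (p := Scl) v = 0 :=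
        (Submodule.Quotient.mk_eq_zero _).2 (SE.le_topologicalClosure hv)
      simp [hhE, Submodule.mkQ_apply, this]
    -- lift to X
    set j : ↥Xf →ₗ[ℝ] X ⧸ M := M.mkQ ∘ₗ Xf.subtype with hj
    have hker : LinearMap.ker j ≤ LinearMap.ker hE := by
      intro v hv
      rw [LinearMap.mem_ker] at hv ⊢
      have : v.1 ∈ M := by
        rw [hj] at hv
        simpa [Submodule.Quotient.mk_eq_zero] using hv
      exact hESE v this
    set hq : (↥Xf ⧸ LinearMap.ker j) →ₗ[ℝ] ℝ := (LinearMap.ker j).liftQ hE hker with hhq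
    set e := j.quotKerEquivRange with he
    set hrm : ↥(LinearMap.range j) →ₗ[ℝ] ℝ := hq ∘ₗ (e.symm : _ →ₗ[ℝ] _) with hhrm
    obtain ⟨ψ, hψ⟩ := LinearMap.exists_extend hrm
    set f : X →ₗ[ℝ] ℝ := ψ ∘ₗ M.mkQ with hf
    have hfXf : ∀ v : ↥Xf, f v.1 = hE v := by
      intro v
      have h1 : M.mkQ v.1 = ((⟨j v, LinearMap.mem_range_self j v⟩ : ↥(LinearMap.range j)) : X ⧸ M) := rfl
      have h2 : e (Submodule.Quotient.mk v) = ⟨j v, LinearMap.mem_range_self j v⟩ := by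
        apply Subtype.ext
        exact j.quotKerEquivRange_apply_mk v
      have h3 : (e.symm ⟨j v, LinearMap.mem_range_self j v⟩ : ↥Xf ⧸ LinearMap.ker j) =
          Submodule.Quotient.mk v := by
        rw [← h2, LinearEquiv.symm_apply_apply]
      calc f v.1 = ψ (M.mkQ v.1) := rfl
        _ = ψ ((LinearMap.range j).subtype ⟨j v, LinearMap.mem_range_self j v⟩) := by rw [h1]; rfl
        _ = hrm ⟨j v, LinearMap.mem_range_self j v⟩ := by rw [← hψ]; rfl
        _ = hq (e.symm ⟨j v, LinearMap.mem_range_self j v⟩) := rfl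
        _ = hq (Submodule.Quotient.mk v) := by rw [h3]
        _ = hE v := Submodule.liftQ_apply _ _ _
    have hfM : ∀ y ∈ M, f y = 0 := by
      intro y hy
      have : M.mkQ y = 0 := (Submodule.Quotient.mk_eq_zero _).2 hy
      simp [hf, this]
    have hfx : f x ≠ 0 := by
      have h1 : f x = f m + f u := by rw [← hmu, map_add]
      rw [h1, hfM m hm, zero_add]
      have h2 : f u = hE u' := hfXf u'
      rw [h2]
      simpa [hhE, Submodule.mkQ_apply] using hgu
    refine ⟨f, hfM, hfx, ENNReal.ofReal ‖g‖ + 1, by simp, fun z => ?_⟩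
    rcases eq_or_ne (ρ z) ⊤ with hz | hz
    · rw [hz, ENNReal.mul_top (by simp)]
      exact le_top
    · have hzXf : z ∈ Xf := by
        show ρ z < ⊤
        exact lt_top_iff_ne_top.2 hz
      have h1 : f z = hE ⟨z, hzXf⟩ := hfXf ⟨z, hzXf⟩
      have h2 : |f z| ≤ ‖g‖ * (ρ z).toReal := by
        rw [h1]
        have := hEbound ⟨z, hzXf⟩
        rwa [hnorm] at this
      calc ENNReal.ofReal |f z| ≤ ENNReal.ofReal (‖g‖ * (ρ z).toReal) :=
            ENNReal.ofReal_le_ofReal h2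
        _ = ENNReal.ofReal ‖g‖ * ENNReal.ofReal (ρ z).toReal :=
            ENNReal.ofReal_mul (norm_nonneg g)
        _ = ENNReal.ofReal ‖g‖ * ρ z := by rw [ENNReal.ofReal_toReal hz]
        _ ≤ (ENNReal.ofReal ‖g‖ + 1) * ρ z := by
            exact mul_le_mul' le_self_add le_rfl
  · -- Case A : x ∉ M ⊔ Xf
    set P : Submodule ℝ X := M ⊔ Xf with hP
    have hxP : P.mkQ x ≠ 0 := by
      rw [Ne, Submodule.mkQ_apply, Submodule.Quotient.mk_eq_zero]
      exact hcase
    have hdual : ∃ φ : Module.Dual ℝ (X ⧸ P), φ (P.mkQ x) ≠ 0 := by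
      by_contra hcon
      push_neg at hcon
      exact hxP ((Module.forall_dual_apply_eq_zero_iff ℝ _).1 hcon)
    obtain ⟨φ, hφ⟩ := hdual
    set f : X →ₗ[ℝ] ℝ := φ ∘ₗ P.mkQ with hf
    have hfM : ∀ y ∈ M, f y = 0 := by
      intro y hy
      have : P.mkQ y = 0 := (Submodule.Quotient.mk_eq_zero _).2 (le_sup_left (α := Submodule ℝ X) hy)
      simp [hf, this]
    refine ⟨f, hfM, hφ, 1, ENNReal.one_ne_top, fun z => ?_⟩
    rcases eq_or_ne (ρ z) ⊤ with hz | hz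
    · rw [hz]
      simp
    · have hzXf : z ∈ Xf := by
        show ρ z < ⊤
        exact lt_top_iff_ne_top.2 hz
      have : P.mkQ z = 0 := (Submodule.Quotient.mk_eq_zero _).2
        (le_sup_right (α := Submodule ℝ X) hzXf)
      have hfz : f z = 0 := by simp [hf, this]
      simp [hfz]

end Dir2Functional
section Dir2Dense

variable {X : Type*} [AddCommGroup X] [Module ℝ X]

lemma span_dense_of_separable {ρ : X → ℝ≥0∞} (hρ : IsExtNorm ρ)
    (t tF : TopologicalSpace X) (ht : t = elcsTopology {ρ})
    (hF : IsFlcTopology t tF) (hsep : @TopologicalSpace.SeparableSpace X tF) :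
    ∃ D : Set X, D.Countable ∧ ∀ (x : X) (ε : ℝ≥0∞), 0 < ε →
      ∃ y ∈ Submodule.span ℝ D, ρ (x - y) < ε := by
  classical
  letI : TopologicalSpace X := tF
  haveI : IsTopologicalAddGroup X := hF.2.1
  haveI : ContinuousSMul ℝ X := hF.2.2.1
  obtain ⟨D, hDc, hDd⟩ := TopologicalSpace.exists_countable_dense X
  refine ⟨D, hDc, ?_⟩
  set S : Submodule ℝ X := Submodule.span ℝ D with hS
  set Mρ : Submodule ℝ X :=
    { carrier := {x : X | ∀ ε : ℝ≥0∞, 0 < ε → ∃ y ∈ S, ρ (x - y) < ε}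
      add_mem' := by
        rintro x₁ x₂ hx₁ hx₂ ε hε
        obtain ⟨y₁, hy₁, hρ₁⟩ := hx₁ (ε / 2) (ENNReal.half_pos (ne_of_gt hε))
        obtain ⟨y₂, hy₂, hρ₂⟩ := hx₂ (ε / 2) (ENNReal.half_pos (ne_of_gt hε))
        refine ⟨y₁ + y₂, S.add_mem hy₁ hy₂, ?_⟩
        have h1 : x₁ + x₂ - (y₁ + y₂) = (x₁ - y₁) + (x₂ - y₂) := by abel
        rw [h1]
        calc ρ ((x₁ - y₁) + (x₂ - y₂)) ≤ ρ (x₁ - y₁) + ρ (x₂ - y₂) := hρ.1.2 _ _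
          _ < ε / 2 + ε / 2 := ENNReal.add_lt_add hρ₁ hρ₂
          _ = ε := ENNReal.add_halves ε
      zero_mem' := by
        intro ε hε
        exact ⟨0, S.zero_mem, by simpa [hρ.1.map_zero] using hε⟩
      smul_mem' := by
        rintro a x hx ε hε
        rcases eq_or_ne a 0 with rfl | ha
        · refine ⟨0, S.zero_mem, ?_⟩
          simpa [hρ.1.map_zero] using hε
        · have hab : ENNReal.ofReal |a| ≠ 0 := by
            simp only [Ne, ENNReal.ofReal_eq_zero, not_le]
            exact abs_pos.2 ha
          have habt : ENNReal.ofReal |a| ≠ ⊤ := ENNReal.ofReal_ne_top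
          obtain ⟨y, hy, hρy⟩ := hx (ε / ENNReal.ofReal |a|)
            (ENNReal.div_pos (ne_of_gt hε) habt)
          refine ⟨a • y, S.smul_mem a hy, ?_⟩
          have h1 : a • x - a • y = a • (x - y) := by
            rw [smul_sub]
          rw [h1, hρ.1.1]
          calc ENNReal.ofReal |a| * ρ (x - y)
              < ENNReal.ofReal |a| * (ε / ENNReal.ofReal |a|) :=
                (ENNReal.mul_lt_mul_iff_right hab habt).2 hρy
            _ = ε := ENNReal.mul_div_cancel hab habt } with hMρ
  suffices hM : ∀ x : X, x ∈ Mρ by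
    intro x ε hε
    exact hM x ε hε
  have hclosed : IsClosed (Mρ : Set X) := by
    rw [← isOpen_compl_iff, isOpen_iff_mem_nhds]
    intro x hx
    have hx' : ∃ ε₀ : ℝ≥0∞, 0 < ε₀ ∧ ∀ y ∈ S, ε₀ ≤ ρ (x - y) := by
      by_contra hcon
      push_neg at hcon
      refine hx ?_
      intro ε hε
      obtain ⟨y, hy, hρy⟩ := hcon ε hε
      exact ⟨y, hy, hρy⟩
    obtain ⟨ε₀, hε₀, hdd⟩ := hx'
    obtain ⟨f, hfS, hfx, c, hcfin, hcb⟩ := exists_separating_functional hρ S x ε₀ hε₀ hdd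
    have hfM : ∀ y ∈ Mρ, f y = 0 := by
      intro y hy
      have key : ∀ δ : ℝ, 0 < δ → |f y| ≤ δ := by
        intro δ hδ
        obtain ⟨y', hy', hρy'⟩ := hy (ENNReal.ofReal δ / (c + 1))
          (ENNReal.div_pos (by simp [ENNReal.ofReal_eq_zero]; linarith)
            (by simp [hcfin, ENNReal.add_eq_top]))
        have h1 : f y = f (y - y') := by
          rw [map_sub, hfS y' hy', sub_zero]
        rw [h1]
        have h2 : ENNReal.ofReal |f (y - y')| ≤ ENNReal.ofReal δ := by
          calc ENNReal.ofReal |f (y - y')| ≤ c * ρ (y - y') := hcb _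
            _ ≤ (c + 1) * (ENNReal.ofReal δ / (c + 1)) :=
                mul_le_mul' le_self_add (le_of_lt hρy')
            _ = ENNReal.ofReal δ := ENNReal.mul_div_cancel (by simp)
                (by simp [hcfin, ENNReal.add_eq_top])
        rwa [ENNReal.ofReal_le_ofReal_iff hδ.le] at h2
      have h3 : |f y| ≤ 0 := by
        by_contra hcon
        push_neg at hcon
        have := key (|f y| / 2) (by linarith)
        linarith
      have := abs_nonneg (f y)
      have h4 : |f y| = 0 := le_antisymm h3 this
      exact abs_eq_zero.1 h4
    have hft : @Continuous X ℝ t _ (fun z => f z) := by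
      rw [ht]
      exact continuous_of_elcs_bound hρ.1 f c hcfin hcb
    have hftF : Continuous (fun z => f z) := dual_continuous_flc hF f hft
    have hopen : f ⁻¹' ({0}ᶜ) ∈ nhds x := by
      refine IsOpen.mem_nhds (hftF.isOpen_preimage _ isOpen_compl_singleton) ?_
      simp [hfx]
    exact Filter.mem_of_superset hopen fun z hz hzM => hz (hfM z hzM)
  -- density
  have hDM : (D : Set X) ⊆ (Mρ : Set X) := by
    intro d hd ε hε
    exact ⟨d, Submodule.subset_span hd, by simpa [hρ.1.map_zero] using hε⟩
  have hdense : Dense (Mρ : Set X) := hDd.mono hDM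
  have huniv : (Mρ : Set X) = Set.univ := by
    rw [← hdense.closure_eq, hclosed.closure_eq]
  intro x
  have : x ∈ (Mρ : Set X) := by rw [huniv]; trivial
  exact this

end Dir2Dense
section Dir2Metr

variable {X : Type*} [AddCommGroup X] [Module ℝ X]

set_option maxHeartbeats 1000000 in
set_option synthInstance.maxHeartbeats 400000 in
lemma stmt11_dir2 (ρ : X → ℝ≥0∞) (hρ : IsExtNorm ρ)
    (t tF : TopologicalSpace X) (ht : t = elcsTopology {ρ})
    (hF : IsFlcTopology t tF) (hsep : @TopologicalSpace.SeparableSpace X tF) :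
    @TopologicalSpace.MetrizableSpace
        {f : ↥(dualSubmodule t) // ∀ x : X, ρ x ≤ 1 → |f.1 x| ≤ 1}
        (TopologicalSpace.induced Subtype.val (weakStarTopology t)) := by
  classical
  obtain ⟨D, hDc, hdense⟩ := span_dense_of_separable hρ t tF ht hF hsep
  haveI : Countable ↥D := hDc.to_subtype
  letI tD : TopologicalSpace ↥(dualSubmodule t) := weakStarTopology t
  set Btype := {f : ↥(dualSubmodule t) // ∀ x : X, ρ x ≤ 1 → |f.1 x| ≤ 1} with hBtype
  set Φ : Btype → (↥D → ℝ) := fun f d => f.1.1 d.1 with hΦ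
  set TB : TopologicalSpace Btype := TopologicalSpace.induced Subtype.val tD with hTB
  set T2 : TopologicalSpace Btype := TopologicalSpace.induced Φ Pi.topologicalSpace with hT2
  have hbB : ∀ (f : Btype) (z : X), ENNReal.ofReal |f.1.1 z| ≤ ρ z :=
    fun f z => unit_ball_bound hρ f.1.1 f.2 z
  -- evaluations at span points are continuous for the coordinate topology
  have hspan : ∀ y ∈ Submodule.span ℝ D, @Continuous Btype ℝ T2 _ (fun f => f.1.1 y) := by
    intro y hy
    induction hy using Submodule.span_induction with
    | mem z hz =>
        letI : TopologicalSpace Btype := T2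
        have h1 : (fun f : Btype => f.1.1 z) = (fun v : ↥D → ℝ => v ⟨z, hz⟩) ∘ Φ := rfl
        rw [h1]
        exact (continuous_apply _).comp continuous_induced_dom
    | zero =>
        letI : TopologicalSpace Btype := T2
        have h1 : (fun f : Btype => f.1.1 0) = fun _ => (0 : ℝ) := by
          funext f; exact map_zero f.1.1
        rw [h1]
        exact continuous_const
    | add v w hv hw ihv ihw =>
        letI : TopologicalSpace Btype := T2
        have h1 : (fun f : Btype => f.1.1 (v + w)) =
            fun f : Btype => f.1.1 v + f.1.1 w := by
          funext f; exact map_add f.1.1 v w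
        rw [h1]
        exact ihv.add ihw
    | smul a v hv ihv =>
        letI : TopologicalSpace Btype := T2
        have h1 : (fun f : Btype => f.1.1 (a • v)) =
            fun f : Btype => a * f.1.1 v := by
          funext f
          rw [map_smul, smul_eq_mul]
        rw [h1]
        exact continuous_const.mul ihv
  -- evaluations at arbitrary points are continuous for the coordinate topology
  have hx_cont : ∀ x : X, @Continuous Btype ℝ T2 _ (fun f => f.1.1 x) := by
    intro x
    letI : TopologicalSpace Btype := T2
    have hseq : ∀ n : ℕ, ∃ y ∈ Submodule.span ℝ D,
        ρ (x - y) < ENNReal.ofReal (1 / (n + 1)) := by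
      intro n
      refine hdense x _ (ENNReal.ofReal_pos.2 (by positivity))
    choose y hy hρy using hseq
    have hTU : TendstoUniformly (fun (n : ℕ) (f : Btype) => f.1.1 (y n))
        (fun f : Btype => f.1.1 x) Filter.atTop := by
      rw [Metric.tendstoUniformly_iff]
      intro ε hε
      obtain ⟨N, hN⟩ := exists_nat_gt (1 / ε)
      filter_upwards [Filter.eventually_ge_atTop N] with n hn f
      have h1 : ENNReal.ofReal |f.1.1 (x - y n)| < ENNReal.ofReal (1 / (n + 1)) :=
        lt_of_le_of_lt (hbB f _) (hρy n)
      have h2 : |f.1.1 (x - y n)| < 1 / (n + 1) :=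
        (ENNReal.ofReal_lt_ofReal_iff (by positivity)).1 h1
      have h3 : (1 : ℝ) / (n + 1) < ε := by
        have hn' : (1 : ℝ) / ε < n + 1 := by
          have : (N : ℝ) ≤ n := Nat.cast_le.2 hn
          linarith
        rw [div_lt_iff₀ (by positivity)] at hn' ⊢
        nlinarith
      rw [Real.dist_eq, ← map_sub]
      exact lt_trans h2 h3
    exact hTU.continuous (Filter.Eventually.of_forall fun n => hspan (y n) (hy n)).frequently
  -- the two topologies agree
  have heq : TB = T2 := by
    apply le_antisymm
    · have hcΦ : @Continuous Btype (↥D → ℝ) TB _ Φ := by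
        letI : TopologicalSpace Btype := TB
        refine continuous_pi fun d => ?_
        have h1 : @Continuous _ _ tD _ (fun g : ↥(dualSubmodule t) => g.1 d.1) :=
          continuous_iInf_dom continuous_induced_dom
        have h2 : @Continuous Btype _ TB tD (Subtype.val) := continuous_induced_dom
        exact h1.comp h2
      exact continuous_iff_le_induced.1 hcΦ
    · have h2 : TB = ⨅ x : X, TopologicalSpace.induced
          (fun f : Btype => f.1.1 x) inferInstance := by
        rw [hTB, show tD = weakStarTopology t from rfl, weakStarTopology, induced_iInf]
        exact iInf_congr fun x => induced_compose
      rw [h2]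
      exact le_iInf fun x => continuous_iff_le_induced.1 (hx_cont x)
  -- injectivity of Φ
  have hinj : Function.Injective Φ := by
    intro f g hfg
    have hDeq : ∀ z (hz : z ∈ D), f.1.1 z = g.1.1 z := fun z hz => congrFun hfg ⟨z, hz⟩
    have hspanEq : ∀ y ∈ Submodule.span ℝ D, f.1.1 y = g.1.1 y := by
      intro y hy
      induction hy using Submodule.span_induction with
      | mem z hz => exact hDeq z hz
      | zero => simp
      | add v w hv hw ihv ihw => rw [map_add, map_add, ihv, ihw]
      | smul a v hv ihv => rw [map_smul, map_smul, ihv]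
    have hall : ∀ x : X, f.1.1 x = g.1.1 x := by
      intro x
      have key : ∀ δ : ℝ, 0 < δ → |f.1.1 x - g.1.1 x| ≤ δ := by
        intro δ hδ
        obtain ⟨y, hy, hρy⟩ := hdense x (ENNReal.ofReal (δ / 2))
          (ENNReal.ofReal_pos.2 (by linarith))
        have h1 : |f.1.1 (x - y)| ≤ δ / 2 := by
          have := lt_of_le_of_lt (hbB f (x - y)) hρy
          exact ((ENNReal.ofReal_lt_ofReal_iff (by linarith)).1 this).le
        have h2 : |g.1.1 (x - y)| ≤ δ / 2 := by
          have := lt_of_le_of_lt (hbB g (x - y)) hρy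
          exact ((ENNReal.ofReal_lt_ofReal_iff (by linarith)).1 this).le
        have h3 : f.1.1 x - g.1.1 x = f.1.1 (x - y) - g.1.1 (x - y) := by
          rw [map_sub, map_sub, hspanEq y hy]
          ring
        rw [h3]
        calc |f.1.1 (x - y) - g.1.1 (x - y)| ≤ |f.1.1 (x - y)| + |g.1.1 (x - y)| :=
              abs_sub _ _
          _ ≤ δ / 2 + δ / 2 := add_le_add h1 h2
          _ = δ := by ring
      have h4 : |f.1.1 x - g.1.1 x| ≤ 0 := by
        by_contra hcon
        push_neg at hcon
        have := key (|f.1.1 x - g.1.1 x| / 2) (by linarith)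
        linarith
      have h5 := abs_nonneg (f.1.1 x - g.1.1 x)
      have h6 : f.1.1 x - g.1.1 x = 0 := abs_eq_zero.1 (le_antisymm h4 h5)
      linarith
    exact Subtype.ext (Subtype.ext (LinearMap.ext hall))
  -- conclude
  show @TopologicalSpace.MetrizableSpace Btype TB
  rw [heq]
  letI : TopologicalSpace Btype := T2
  have hemb : Topology.IsEmbedding Φ := ⟨⟨rfl⟩, hinj⟩
  exact hemb.metrizableSpace

end Dir2Metr
/-- the closed unit ball of the dual of an enls is weak* metrizable iff
`(X, τ_F)` is separable. -/
theorem stmt11 {X : Type*} [AddCommGroup X] [Module ℝ X]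
    (ρ : X → ℝ≥0∞) (hρ : IsExtNorm ρ)
    (t tF : TopologicalSpace X) (ht : t = elcsTopology {ρ})
    (hF : IsFlcTopology t tF) :
    @TopologicalSpace.MetrizableSpace
        {f : ↥(dualSubmodule t) // ∀ x : X, ρ x ≤ 1 → |f.1 x| ≤ 1}
        (TopologicalSpace.induced Subtype.val (weakStarTopology t)) ↔
      @TopologicalSpace.SeparableSpace X tF :=
  ⟨fun hm => stmt11_dir1 ρ hρ t tF ht hF hm,
   fun hsep => stmt11_dir2 ρ hρ t tF ht hF hsep⟩
end

section
/- Let 𝔅 be a bornology with closed base on a metric space (X, d), and equip C(X) with the topology τ_𝔅 of uniform convergence on members of 𝔅, induced by the extended seminorms ρ_B(f) = sup_{x∈B} |f(x)|, B ∈ 𝔅. Then the finest locally convex topology coarser than τ_𝔅 equals the weak topology of (C(X), τ_𝔅) if and only if 𝔅 is the bornology of all finite subsets of X. -/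
open scoped ENNReal Pointwise
open TopologicalSpace

section Stmt13Aux

open scoped ENNReal
open TopologicalSpace Topology

variable {Y : Type*} [MetricSpace Y]

/-- Evaluation at a point as a linear map on `C(Y, ℝ)`. -/
def evalLM (y : Y) : C(Y, ℝ) →ₗ[ℝ] ℝ where
  toFun f := f y
  map_add' _ _ := rfl
  map_smul' _ _ := rfl

theorem supExtSeminorm_singleton (y : Y) (f : C(Y, ℝ)) :
    supExtSeminorm {y} f = ENNReal.ofReal |f y| := by
  simp [supExtSeminorm]

theorem elcs_isOpen_ball {𝔅 : Set (Set Y)} {t : TopologicalSpace C(Y, ℝ)}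
    (htop : t = elcsTopology {ρ | ∃ B ∈ 𝔅, ρ = supExtSeminorm B})
    {B : Set Y} (hB : B ∈ 𝔅) (c : C(Y, ℝ)) {ε : ℝ≥0∞} (hε : 0 < ε) :
    IsOpen[t] {g : C(Y, ℝ) | supExtSeminorm B (g - c) < ε} := by
  rw [htop]
  exact TopologicalSpace.isOpen_generateFrom_of_mem
    ⟨supExtSeminorm B, ⟨B, hB, rfl⟩, c, ε, hε, rfl⟩

theorem eval_continuous {𝔅 : Set (Set Y)}
    (hcov : ∀ y : Y, ∃ B ∈ 𝔅, y ∈ B)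
    (hdown : ∀ B ∈ 𝔅, ∀ A : Set Y, A ⊆ B → A.Nonempty → A ∈ 𝔅)
    {t : TopologicalSpace C(Y, ℝ)}
    (htop : t = elcsTopology {ρ | ∃ B ∈ 𝔅, ρ = supExtSeminorm B}) (y : Y) :
    Continuous[t, _] fun f : C(Y, ℝ) => f y := by
  have hy : ({y} : Set Y) ∈ 𝔅 := by
    obtain ⟨B, hB, hyB⟩ := hcov y
    exact hdown B hB {y} (Set.singleton_subset_iff.mpr hyB) ⟨y, rfl⟩
  letI := t
  rw [continuous_def]
  intro U hU
  rw [isOpen_iff_forall_mem_open]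
  intro f hf
  obtain ⟨r, hr, hball⟩ := Metric.isOpen_iff.mp hU _ hf
  refine ⟨{g : C(Y, ℝ) | supExtSeminorm {y} (g - f) < ENNReal.ofReal r}, ?_,
    elcs_isOpen_ball htop hy f (ENNReal.ofReal_pos.mpr hr), ?_⟩
  · intro g hg
    rw [Set.mem_setOf_eq, supExtSeminorm_singleton] at hg
    have h1 : |(g - f) y| < r := (ENNReal.ofReal_lt_ofReal_iff hr).mp hg
    apply hball
    rw [Metric.mem_ball, Real.dist_eq]
    simpa using h1
  · rw [Set.mem_setOf_eq, supExtSeminorm_singleton]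
    simpa using ENNReal.ofReal_pos.mpr hr

set_option maxHeartbeats 1000000 in
theorem infinite_flc_ne_weak {𝔅 : Set (Set Y)} {B : Set Y} (hB : B ∈ 𝔅)
    (hBinf : B.Infinite) (t tF : TopologicalSpace C(Y, ℝ))
    (htop : t = elcsTopology {ρ | ∃ B ∈ 𝔅, ρ = supExtSeminorm B})
    (hF : IsFlcTopology t tF) : tF ≠ weakTopology t := by
  classical
  have hBne : B.Nonempty := hBinf.nonempty
  haveI : Nonempty B := hBne.to_subtype
  set M := boundedOnSubmodule (Y := Y) B with hM
  obtain ⟨q, hq⟩ := Submodule.exists_isCompl M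
  set π := M.linearProjOfIsCompl q hq with hπ
  have memM_iff : ∀ f : C(Y, ℝ), f ∈ M ↔ ∃ C : ℝ, ∀ x ∈ B, |f x| ≤ C := fun f => Iff.rfl
  have pfix : ∀ f : C(Y, ℝ), f ∈ M → ((π f : M) : C(Y, ℝ)) = f := by
    intro f hf
    have h1 := Submodule.linearProjOfIsCompl_apply_left hq ⟨f, hf⟩
    exact congrArg Subtype.val h1
  have bdd : ∀ f : C(Y, ℝ), BddAbove (Set.range fun y : B => |((π f : M) : C(Y, ℝ)) y|) := by
    intro f
    obtain ⟨C, hC⟩ := (memM_iff _).mp (π f).2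
    exact ⟨C, by rintro _ ⟨y, rfl⟩; exact hC y y.2⟩
  set pfun : C(Y, ℝ) → ℝ := fun f => ⨆ y : B, |((π f : M) : C(Y, ℝ)) y| with hpfun
  have pfun_le : ∀ (f : C(Y, ℝ)) (C : ℝ), (∀ y ∈ B, |((π f : M) : C(Y, ℝ)) y| ≤ C) →
      pfun f ≤ C := fun f C h => ciSup_le fun y => h y y.2
  have le_pfun : ∀ (f : C(Y, ℝ)) (y : B), |((π f : M) : C(Y, ℝ)) y| ≤ pfun f :=
    fun f y => le_ciSup (bdd f) y
  set p : Seminorm ℝ C(Y, ℝ) := Seminorm.of pfun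
    (by
      intro f g
      refine pfun_le _ _ fun y hy => ?_
      have h1 : ((π (f + g) : M) : C(Y, ℝ)) y
          = ((π f : M) : C(Y, ℝ)) y + ((π g : M) : C(Y, ℝ)) y := by
        rw [map_add]; rfl
      rw [h1]
      exact (abs_add_le _ _).trans (add_le_add (le_pfun f ⟨y, hy⟩) (le_pfun g ⟨y, hy⟩)))
    (by
      intro a f
      have h1 : ∀ y : B, |((π (a • f) : M) : C(Y, ℝ)) y| = |a| * |((π f : M) : C(Y, ℝ)) y| := by
        intro y
        have : ((π (a • f) : M) : C(Y, ℝ)) = a • ((π f : M) : C(Y, ℝ)) := by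
          rw [map_smul]; rfl
        rw [this, ContinuousMap.smul_apply, smul_eq_mul, abs_mul]
      simp only [hpfun, h1, Real.norm_eq_abs]
      exact (Real.mul_iSup_of_nonneg (abs_nonneg a) _).symm) with hp
  have p_apply : ∀ f : C(Y, ℝ), p f = pfun f := fun f => rfl
  set fam : SeminormFamily ℝ C(Y, ℝ) (Fin 1) := fun _ => p with hfam
  set t' := fam.moduleFilterBasis.topology with ht'
  have hws : WithSeminorms (topology := t') fam := ⟨rfl⟩
  -- t ≤ t'
  have ht_le : t ≤ t' := by
    rw [TopologicalSpace.le_def]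
    intro U hU
    have hU' : ∀ f ∈ U, ∃ s : Finset (Fin 1), ∃ r > 0, (s.sup fam).ball f r ⊆ U := by
      letI := t'
      exact (hws.isOpen_iff_mem_balls U).mp hU
    letI := t
    rw [isOpen_iff_forall_mem_open]
    intro f hf
    obtain ⟨s, r, hr, hball⟩ := hU' f hf
    refine ⟨{g : C(Y, ℝ) | supExtSeminorm B (g - f) < ENNReal.ofReal (r / 2)}, ?_,
      elcs_isOpen_ball htop hB f (ENNReal.ofReal_pos.mpr (by linarith)), ?_⟩
    · intro g hg
      rw [Set.mem_setOf_eq] at hg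
      apply hball
      apply Seminorm.ball_antitone (show s.sup fam ≤ p from Finset.sup_le fun i _ => le_rfl)
      rw [Seminorm.mem_ball]
      have hgf : ∀ y ∈ B, |(g - f) y| ≤ r / 2 := by
        intro y hy
        have h1 : ENNReal.ofReal |(g - f) y| < ENNReal.ofReal (r / 2) :=
          lt_of_le_of_lt
            (le_iSup₂ (f := fun x (_ : x ∈ B) => ENNReal.ofReal |(g - f) x|) y hy) hg
        exact le_of_lt ((ENNReal.ofReal_lt_ofReal_iff (by linarith)).mp h1)
      have hmem : (g - f) ∈ M := ⟨r / 2, hgf⟩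
      have h2 : pfun (g - f) ≤ r / 2 := by
        refine pfun_le _ _ ?_
        rw [pfix _ hmem]
        exact hgf
      rw [p_apply]
      linarith
    · rw [Set.mem_setOf_eq]
      have : (f - f : C(Y, ℝ)) = 0 := sub_self f
      rw [this]
      have h0 : supExtSeminorm B (0 : C(Y, ℝ)) = 0 := by simp [supExtSeminorm]
      rw [h0]
      exact ENNReal.ofReal_pos.mpr (by linarith)
  have hgrp : @IsTopologicalAddGroup C(Y, ℝ) t' _ := hws.topologicalAddGroup
  have hsmul : @ContinuousSMul ℝ C(Y, ℝ) _ _ t' := hws.continuousSMul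
  have hlc : @LocallyConvexSpace ℝ C(Y, ℝ) _ _ _ _ t' := hws.toLocallyConvexSpace
  have htF_le : tF ≤ t' := hF.2.2.2.2 t' ht_le hgrp hsmul hlc
  intro hEq
  have hw_le : weakTopology t ≤ t' := hEq ▸ htF_le
  have hU₀' : IsOpen[t'] {f : C(Y, ℝ) | p f < 1} := by
    letI := t'
    have hc : Continuous p := hws.continuous_seminorm 0
    have h1 : {f : C(Y, ℝ) | p f < 1} = p ⁻¹' Set.Iio 1 := rfl
    rw [h1]
    exact IsOpen.preimage hc isOpen_Iio
  have hU₀w : {f : C(Y, ℝ) | p f < 1} ∈ @nhds _ (weakTopology t) 0 := by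
    letI := weakTopology t
    refine IsOpen.mem_nhds (TopologicalSpace.le_def.mp hw_le _ hU₀') ?_
    simp [map_zero]
  have hU₀w' : {f : C(Y, ℝ) | p f < 1} ∈
      ⨅ φ : ↥(dualSubmodule t), Filter.comap (fun g : C(Y, ℝ) => φ.1 g) (nhds (0 : ℝ)) := by
    have h1 : @nhds _ (weakTopology t) (0 : C(Y, ℝ)) =
        ⨅ φ : ↥(dualSubmodule t), Filter.comap (fun g : C(Y, ℝ) => φ.1 g) (nhds (0 : ℝ)) := by
      rw [weakTopology, nhds_iInf]
      exact iInf_congr fun φ => by rw [nhds_induced, map_zero]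
    rw [← h1]
    exact hU₀w
  rw [Filter.mem_iInf] at hU₀w'
  obtain ⟨I, hIfin, V, hV, hUeq⟩ := hU₀w'
  haveI := hIfin.fintype
  have hker : ∀ f : C(Y, ℝ), (∀ φ : I, (φ : ↥(dualSubmodule t)).1 f = 0) → p f < 1 := by
    intro f hf
    have h1 : f ∈ ⋂ φ : I, V φ := by
      refine Set.mem_iInter.mpr fun φ => ?_
      obtain ⟨W, hW, hWsub⟩ := Filter.mem_comap.mp (hV φ)
      apply hWsub
      rw [Set.mem_preimage, hf φ]
      exact mem_of_mem_nhds hW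
    rw [← hUeq] at h1
    exact h1
  have hker0 : ∀ f : C(Y, ℝ), (∀ φ : I, (φ : ↥(dualSubmodule t)).1 f = 0) → p f = 0 := by
    intro f hf
    by_contra hne
    have hpos : 0 < p f := lt_of_le_of_ne (apply_nonneg p f) (Ne.symm hne)
    have h2 := hker ((2 / p f) • f) fun φ => by rw [map_smul, hf φ, smul_eq_mul, mul_zero]
    rw [map_smul_eq_mul, Real.norm_eq_abs, abs_of_pos (by positivity),
      div_mul_cancel₀ _ (ne_of_gt hpos)] at h2
    linarith
  set k := Fintype.card I with hk
  obtain ⟨T, hTsub, hTfin, hTcard⟩ := hBinf.exists_subset_ncard_eq (k + 1)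
  haveI := hTfin.fintype
  have hTcard' : Fintype.card T = k + 1 := by
    rw [← Nat.card_eq_fintype_card, Nat.card_coe_set_eq, hTcard]
  -- minimal distance between distinct points of T
  have hrex : ∃ r : ℝ, 0 < r ∧ ∀ x ∈ T, ∀ x' ∈ T, x ≠ x' → r ≤ dist x x' := by
    by_cases hS : (((hTfin.toFinset ×ˢ hTfin.toFinset)).filter
        fun qq : Y × Y => qq.1 ≠ qq.2).Nonempty
    · obtain ⟨bb, hbS, hbmin⟩ :=
        Finset.exists_min_image _ (fun qq : Y × Y => dist qq.1 qq.2) hS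
      rw [Finset.mem_filter, Finset.mem_product] at hbS
      refine ⟨dist bb.1 bb.2, dist_pos.mpr hbS.2, ?_⟩
      intro x hx x' hx' hxx'
      refine hbmin (x, x') ?_
      rw [Finset.mem_filter, Finset.mem_product]
      exact ⟨⟨hTfin.mem_toFinset.mpr hx, hTfin.mem_toFinset.mpr hx'⟩, hxx'⟩
    · refine ⟨1, one_pos, fun x hx x' hx' hxx' => absurd ⟨(x, x'), ?_⟩ hS⟩
      rw [Finset.mem_filter, Finset.mem_product]
      exact ⟨⟨hTfin.mem_toFinset.mpr hx, hTfin.mem_toFinset.mpr hx'⟩, hxx'⟩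
  obtain ⟨r, hr, hrmin⟩ := hrex
  -- bump functions
  set gb : Y → C(Y, ℝ) := fun x =>
    ⟨fun z => max 0 (1 - dist z x / r),
      continuous_const.max
        (continuous_const.sub ((continuous_id.dist continuous_const).div_const r))⟩ with hgb
  have gb_self : ∀ x : Y, gb x x = 1 := by
    intro x
    simp [hgb]
  have gb_other : ∀ x x' : Y, r ≤ dist x' x → gb x x' = 0 := by
    intro x x' hd
    have h1 : 1 - dist x' x / r ≤ 0 := by
      have : 1 ≤ dist x' x / r := (one_le_div hr).mpr hd
      linarith
    simp only [hgb, ContinuousMap.coe_mk]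
    exact max_eq_left h1
  have gb_bound : ∀ (x z : Y), |gb x z| ≤ 1 := by
    intro x z
    simp only [hgb, ContinuousMap.coe_mk]
    rw [abs_of_nonneg (le_max_left _ _)]
    refine max_le (by norm_num) ?_
    have : 0 ≤ dist z x / r := div_nonneg dist_nonneg hr.le
    linarith
  have gb_mem : ∀ x : Y, gb x ∈ M := fun x => ⟨1, fun z _ => gb_bound x z⟩
  -- the linear map to ℝ^I
  set gbT : T → C(Y, ℝ) := fun x => gb (x : Y) with hgbT
  set Ψ : (T → ℝ) →ₗ[ℝ] (I → ℝ) :=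
    (LinearMap.pi fun φ : I => ((φ : ↥(dualSubmodule t)) : C(Y, ℝ) →ₗ[ℝ] ℝ)).comp
      (Fintype.linearCombination ℝ gbT) with hΨ
  have hΨ_apply : ∀ (c : T → ℝ) (φ : I),
      Ψ c φ = (φ : ↥(dualSubmodule t)).1 (∑ x : T, c x • gbT x) := fun c φ => rfl
  have hnotinj : ¬ Function.Injective Ψ := by
    intro hinj
    have h1 := LinearMap.finrank_le_finrank_of_injective hinj
    rw [Module.finrank_fintype_fun_eq_card, Module.finrank_fintype_fun_eq_card, hTcard'] at h1
    omega
  obtain ⟨a, b, hab, hne⟩ := Function.not_injective_iff.mp hnotinj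
  set c : T → ℝ := a - b with hc
  have hc0 : c ≠ 0 := sub_ne_zero.mpr hne
  have hΨc : Ψ c = 0 := by rw [map_sub, hab, sub_self]
  set f : C(Y, ℝ) := ∑ x : T, c x • gb x with hf
  have hfI : ∀ φ : I, (φ : ↥(dualSubmodule t)).1 f = 0 := by
    intro φ
    have h1 := congrFun hΨc φ
    rw [hΨ_apply] at h1
    exact h1
  have hpf : p f = 0 := hker0 f hfI
  obtain ⟨x₀, hx₀⟩ := Function.ne_iff.mp hc0
  have hfx₀ : f (x₀ : Y) = c x₀ := by
    have h1 : f (x₀ : Y) = ∑ x : T, c x * gb x (x₀ : Y) := by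
      rw [hf]
      simp only [ContinuousMap.coe_sum, Finset.sum_apply, ContinuousMap.coe_smul,
        Pi.smul_apply, smul_eq_mul]
    rw [h1, Finset.sum_eq_single x₀]
    · rw [gb_self, mul_one]
    · intro x _ hx
      have hxx : (x₀ : Y) ≠ (x : Y) := fun h => hx (Subtype.ext h.symm)
      rw [gb_other _ _ (hrmin _ x₀.2 _ x.2 hxx), mul_zero]
    · intro h
      exact absurd (Finset.mem_univ x₀) h
  have hfM : f ∈ M := Submodule.sum_mem _ fun x _ => Submodule.smul_mem _ _ (gb_mem x)
  have hle : |f (x₀ : Y)| ≤ p f := by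
    have h1 := le_pfun f ⟨(x₀ : Y), hTsub x₀.2⟩
    rw [pfix f hfM] at h1
    exact h1
  rw [hpf, hfx₀] at hle
  exact hx₀ (abs_eq_zero.mp (le_antisymm hle (abs_nonneg _)))

end Stmt13Aux

open Topology in

/-- for a bornology `𝔅` with closed base on a metric space, the flc topology
of `(C(X), τ_𝔅)` equals its weak topology iff `𝔅` is the bornology of finite sets. -/
theorem stmt13 {Y : Type*} [MetricSpace Y] (𝔅 : Set (Set Y))
    (hne : ∀ B ∈ 𝔅, Set.Nonempty B)
    (hcov : ∀ y : Y, ∃ B ∈ 𝔅, y ∈ B)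
    (hunion : ∀ B₁ ∈ 𝔅, ∀ B₂ ∈ 𝔅, B₁ ∪ B₂ ∈ 𝔅)
    (hdown : ∀ B ∈ 𝔅, ∀ A : Set Y, A ⊆ B → A.Nonempty → A ∈ 𝔅)
    (hclosedbase : ∀ B ∈ 𝔅, ∃ C ∈ 𝔅, IsClosed C ∧ B ⊆ C)
    (t tF : TopologicalSpace C(Y, ℝ))
    (ht : IsELCS t {ρ | ∃ B ∈ 𝔅, ρ = supExtSeminorm B})
    (hF : IsFlcTopology t tF) :
    tF = weakTopology t ↔ 𝔅 = {S : Set Y | S.Finite ∧ S.Nonempty} := by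
  classical
  obtain ⟨hP, htop⟩ := ht
  -- all finite nonempty sets belong to 𝔅
  have hsing : ∀ y : Y, ({y} : Set Y) ∈ 𝔅 := by
    intro y
    obtain ⟨B, hB, hyB⟩ := hcov y
    exact hdown B hB {y} (Set.singleton_subset_iff.mpr hyB) ⟨y, rfl⟩
  have hfinmem : ∀ S : Set Y, S.Finite → S.Nonempty → S ∈ 𝔅 := by
    have hFS : ∀ s : Finset Y, s.Nonempty → (↑s : Set Y) ∈ 𝔅 := by
      intro s
      induction s using Finset.cons_induction with
      | empty => intro h; exact absurd h Finset.not_nonempty_empty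
      | cons a s ha ih =>
        intro _
        rcases s.eq_empty_or_nonempty with hs | hs
        · subst hs
          rw [Finset.cons_empty, Finset.coe_singleton]
          exact hsing a
        · have h1 : (↑(Finset.cons a s ha) : Set Y) = {a} ∪ ↑s := by
            rw [Finset.coe_cons, Set.insert_eq]
          rw [h1]
          exact hunion {a} (hsing a) ↑s (ih hs)
    intro S hS hSne
    have h1 : S = ↑hS.toFinset := (Set.Finite.coe_toFinset hS).symm
    rw [h1]
    exact hFS _ ((Set.Finite.toFinset_nonempty hS).mpr hSne)
  have hevalmem : ∀ y : Y, evalLM y ∈ dualSubmodule t := fun y =>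
    eval_continuous hcov hdown htop y
  -- `tF` is always coarser than the weak topology
  have h_tF_weak : tF ≤ weakTopology t := by
    refine le_iInf fun φ => ?_
    have hφ : Continuous[t, _] fun x : C(Y, ℝ) => φ.1 x := φ.2
    have hle : t ≤ TopologicalSpace.induced (fun x : C(Y, ℝ) => φ.1 x) inferInstance :=
      continuous_iff_le_induced.mp hφ
    letI tind : TopologicalSpace C(Y, ℝ) :=
      TopologicalSpace.induced (fun x : C(Y, ℝ) => φ.1 x) inferInstance
    have hws := LinearMap.withSeminorms_induced (norm_withSeminorms ℝ ℝ) φ.1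
    have hgrp : @IsTopologicalAddGroup C(Y, ℝ) tind _ := hws.topologicalAddGroup
    have hsmul : @ContinuousSMul ℝ C(Y, ℝ) _ _ tind := hws.continuousSMul
    have hlc : @LocallyConvexSpace ℝ C(Y, ℝ) _ _ _ _ tind := hws.toLocallyConvexSpace
    exact hF.2.2.2.2 _ hle hgrp hsmul hlc
  constructor
  · intro hEq
    ext B
    simp only [Set.mem_setOf_eq]
    constructor
    · intro hB
      refine ⟨?_, hne B hB⟩
      by_contra hBinf
      exact infinite_flc_ne_weak hB hBinf t tF htop hF hEq
    · rintro ⟨hfin, hne'⟩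
      exact hfinmem B hfin hne'
  · intro h𝔅
    -- the weak topology is finer than `t`
    have hweak_le : weakTopology t ≤ t := by
      conv_rhs => rw [htop]
      refine le_generateFrom ?_
      rintro s ⟨ρ, ⟨B, hB, rfl⟩, c, ε, hε, rfl⟩
      letI := weakTopology t
      have hBfin : B.Finite := by
        rw [h𝔅] at hB
        exact hB.1
      have hseq : {x : C(Y, ℝ) | supExtSeminorm B (x - c) < ε} =
          ⋂ y ∈ hBfin.toFinset,
            (fun g : C(Y, ℝ) => g y) ⁻¹' {a : ℝ | ENNReal.ofReal |a - c y| < ε} := by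
      -- pointwise characterization via finite sup
        ext g
        simp only [Set.mem_setOf_eq, Set.mem_iInter, Set.mem_preimage,
          Set.Finite.mem_toFinset]
        have h1 : supExtSeminorm B (g - c)
            = hBfin.toFinset.sup fun x => ENNReal.ofReal |g x - c x| := by
          rw [supExtSeminorm, Finset.sup_eq_iSup]
          simp [Set.Finite.mem_toFinset]
        rw [h1, Finset.sup_lt_iff hε]
        simp [Set.Finite.mem_toFinset]
      rw [hseq]
      refine isOpen_biInter_finset fun y hy => ?_
      have hcont : Continuous fun g : C(Y, ℝ) => g y := by
        rw [continuous_iff_le_induced]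
        exact iInf_le
          (fun φ : ↥(dualSubmodule t) =>
            TopologicalSpace.induced (fun x : C(Y, ℝ) => φ.1 x) inferInstance)
          ⟨evalLM y, hevalmem y⟩
      refine hcont.isOpen_preimage _ ?_
      have hco : Continuous fun a : ℝ => ENNReal.ofReal |a - c y| :=
        ENNReal.continuous_ofReal.comp ((continuous_id.sub continuous_const).abs)
      exact isOpen_lt hco continuous_const
    exact le_antisymm h_tF_weak (le_trans hweak_le hF.1)
end
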